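/- arXiv:1708.03032 — 4 statements merged into one kernel-verified Lean document; each statement's English description precedes it below -/
import Mathlib

section
/- Let K be an infinite field of characteristic different from 2, n ≥ 2, and G an abelian group. For η, η' ∈ G^{n−1}, the elementary gradings (UJ_n, η) and (UJ_n, η') are graded-isomorphic if and only if η = η' or η = rev η'. In particular, the equivalence classes of G^{n−1} under the relation identifying each sequence with its reversal are in one-to-one correspondence with the isomorphism classes of elementary G-gradings on UJ_n. -/
open Matrix

/-- The submodule of upper triangular `n × n` matrices over `K`. -/
def UTs (K : Type*) [Field K] (n : ℕ) : Submodule K (Matrix (Fin n) (Fin n) K) where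
  carrier := {M | ∀ i j : Fin n, (j : ℕ) < (i : ℕ) → M i j = 0}
  add_mem' := by
    intro a b ha hb i j h
    simp [ha i j h, hb i j h]
  zero_mem' := by
    intro i j h
    simp
  smul_mem' := by
    intro c a ha i j h
    simp [ha i j h]

/-- `UJ K n` : the underlying space of the Jordan algebra of upper triangular matrices. -/
abbrev UJ (K : Type*) [Field K] (n : ℕ) : Type _ := ↥(UTs K n)

theorem mem_UTs {K : Type*} [Field K] {n : ℕ} {a : Matrix (Fin n) (Fin n) K} :
    a ∈ UTs K n ↔ ∀ i j : Fin n, (j : ℕ) < (i : ℕ) → a i j = 0 := Iff.rfl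

theorem UTs_mul_mem {K : Type*} [Field K] {n : ℕ} {a b : Matrix (Fin n) (Fin n) K}
    (ha : a ∈ UTs K n) (hb : b ∈ UTs K n) : a * b ∈ UTs K n := by
  rw [mem_UTs] at ha hb ⊢
  intro i j h
  rw [Matrix.mul_apply]
  apply Finset.sum_eq_zero
  intro k _
  rcases lt_or_ge (k : ℕ) (i : ℕ) with hk | hk
  · rw [ha i k hk, zero_mul]
  · rw [hb k j (lt_of_lt_of_le h hk), mul_zero]

/-- The Jordan product `x ∘ y = xy + yx` on upper triangular matrices. -/
def jmul {K : Type*} [Field K] {n : ℕ} (x y : UJ K n) : UJ K n :=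
  ⟨x.1 * y.1 + y.1 * x.1, (UTs K n).add_mem (UTs_mul_mem x.2 y.2) (UTs_mul_mem y.2 x.2)⟩

/-- The matrix unit `e_{ij}` (with `i ≤ j`) as an element of `UJ K n`. -/
def Eu (K : Type*) [Field K] {n : ℕ} (i j : Fin n) (h : i ≤ j) : UJ K n :=
  ⟨Matrix.single i j 1, by
    rw [mem_UTs]
    intro a b hab
    by_cases h1 : i = a ∧ j = b
    · exfalso
      rcases h1 with ⟨rfl, rfl⟩
      exact absurd hab (not_lt.mpr h)
    · simp only [Matrix.single, Matrix.of_apply, if_neg h1]⟩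

/-- `Y⁺_{i:m} = e_{i:m} + e_{−i:m}` (`0`-based index `i`, `i + m < n`). -/
def Yp (K : Type*) [Field K] {n : ℕ} (i m : ℕ) (h : i + m < n) : UJ K n :=
  Eu K ⟨i, by omega⟩ ⟨i + m, h⟩ (Fin.mk_le_mk.mpr (by omega)) +
  Eu K ⟨n - 1 - i - m, by omega⟩ ⟨n - 1 - i, by omega⟩ (Fin.mk_le_mk.mpr (by omega))

/-- `Y⁻_{i:m} = e_{i:m} − e_{−i:m}` (`0`-based index `i`, `i + m < n`). -/
def Ym (K : Type*) [Field K] {n : ℕ} (i m : ℕ) (h : i + m < n) : UJ K n :=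
  Eu K ⟨i, by omega⟩ ⟨i + m, h⟩ (Fin.mk_le_mk.mpr (by omega)) -
  Eu K ⟨n - 1 - i - m, by omega⟩ ⟨n - 1 - i, by omega⟩ (Fin.mk_le_mk.mpr (by omega))

/-- A `G`-grading on the Jordan algebra `UJ K n`: a direct sum decomposition into
`K`-subspaces `comp g` with `comp g ∘ comp h ⊆ comp (g * h)`. -/
structure UJGrading (K : Type*) [Field K] (n : ℕ) (G : Type*) [Group G] where
  comp : G → Submodule K (UJ K n)
  indep : iSupIndep comp
  sup_top : (⨆ g, comp g) = ⊤
  jmul_mem : ∀ (g h : G) (x y : UJ K n), x ∈ comp g → y ∈ comp h → jmul x y ∈ comp (g * h)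

/-- A graded isomorphism between two families of components: a bijective linear map
preserving the Jordan product and mapping each component onto the corresponding one. -/
def GradedIso {K : Type*} [Field K] {n : ℕ} {G : Type*} [Group G]
    (A A' : G → Submodule K (UJ K n)) : Prop :=
  ∃ ψ : UJ K n ≃ₗ[K] UJ K n,
    (∀ x y, ψ (jmul x y) = jmul (ψ x) (ψ y)) ∧
    ∀ g, (A g).map (ψ : UJ K n →ₗ[K] UJ K n) = A' g

/-- A family of components is elementary if every matrix unit is homogeneous. -/
def IsElementaryFam {K : Type*} [Field K] {n : ℕ} {G : Type*} [Group G]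
    (A : G → Submodule K (UJ K n)) : Prop :=
  ∀ (i j : Fin n) (h : i ≤ j), ∃ g, Eu K i j h ∈ A g

/-- A family of components is of mirror type (MT) if every nonzero `Y⁺_{i:m}`, `Y⁻_{i:m}`
is homogeneous, and their degrees differ whenever both are nonzero. -/
def IsMTFam {K : Type*} [Field K] {n : ℕ} {G : Type*} [Group G]
    (A : G → Submodule K (UJ K n)) : Prop :=
  ∀ (i m : ℕ) (h : i + m < n),
    (Yp K i m h ≠ 0 → ∃ g, Yp K i m h ∈ A g) ∧
    (Ym K i m h ≠ 0 → ∃ g, Ym K i m h ∈ A g) ∧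
    (Yp K i m h ≠ 0 → Ym K i m h ≠ 0 →
      ∀ g g' : G, Yp K i m h ∈ A g → Ym K i m h ∈ A g' → g ≠ g')

/-- The degree of the matrix unit `e_{ij}` in the elementary grading defined by `η`:
`g_i g_{i+1} ⋯ g_{j-1}`. -/
def elemDeg {n : ℕ} (G : Type*) [CommGroup G] (η : Fin (n - 1) → G) (i j : Fin n) : G :=
  ∏ k ∈ (Finset.Ico (i : ℕ) (j : ℕ)).attach,
    η ⟨k.1, by have hk := Finset.mem_Ico.mp k.2; have hj := j.isLt; omega⟩

/-- The components of the elementary grading `(UJ_n, η)`. -/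
def elemComp (K : Type*) [Field K] {n : ℕ} {G : Type*} [CommGroup G]
    (η : Fin (n - 1) → G) (g : G) : Submodule K (UJ K n) :=
  Submodule.span K {x : UJ K n | ∃ (i j : Fin n) (h : i ≤ j), elemDeg G η i j = g ∧ x = Eu K i j h}

/-- The degree of `Y⁺_{i:m}` in the MT grading determined by `η ∈ G^{⌈(n-1)/2⌉}`. -/
def mtDeg {n : ℕ} (G : Type*) [CommGroup G] (η : Fin (n / 2) → G)
    (i m : ℕ) (h : i + m < n) : G :=
  ∏ k ∈ (Finset.range m).attach,
    η ⟨min (i + k.1) (n - 2 - (i + k.1)), by have hk := Finset.mem_range.mp k.2; omega⟩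

/-- The components of the MT grading `(UJ_n, t, η)`:
`deg Y⁺_{i:m}` is `mtDeg η i m` and `deg Y⁻_{i:m} = t ⬝ mtDeg η i m`. -/
def mtComp (K : Type*) [Field K] {n : ℕ} {G : Type*} [CommGroup G]
    (t : G) (η : Fin (n / 2) → G) (g : G) : Submodule K (UJ K n) :=
  Submodule.span K {x : UJ K n |
    (∃ (i m : ℕ) (h : i + m < n), mtDeg G η i m h = g ∧ x = Yp K i m h) ∨
    (∃ (i m : ℕ) (h : i + m < n), t * mtDeg G η i m h = g ∧ x = Ym K i m h)}

/-- The set `𝒯_m` of permutations that strictly decrease to the value `0` and then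
strictly increase. -/
def TT (m : ℕ) : Set (Equiv.Perm (Fin m)) :=
  {σ | ∃ t : Fin m, (σ t : ℕ) = 0 ∧
    (∀ a b : Fin m, a < b → b ≤ t → σ b < σ a) ∧
    (∀ a b : Fin m, t ≤ a → a < b → σ a < σ b)}

/-- The left-normed Jordan product of a list of elements (`0` for the empty list). -/
def jprod {K : Type*} [Field K] {n : ℕ} : List (UJ K n) → UJ K n
  | [] => 0
  | x :: xs => xs.foldl jmul x

/-- The `k`-th left-normed Jordan power `x ∘ x ∘ ⋯ ∘ x` (`k` factors, `0` for `k = 0`). -/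
def jpow {K : Type*} [Field K] {n : ℕ} (x : UJ K n) : ℕ → UJ K n
  | 0 => 0
  | 1 => x
  | (k + 2) => jmul (jpow x (k + 1)) x

section Basics
variable {K : Type*} [Field K] {n : ℕ}

theorem jmul_coe (x y : UJ K n) :
    ((jmul x y : UJ K n) : Matrix (Fin n) (Fin n) K) = x.1 * y.1 + y.1 * x.1 := rfl

theorem Eu_apply (i j : Fin n) (h : i ≤ j) (a b : Fin n) :
    (Eu K i j h).1 a b = if i = a ∧ j = b then 1 else 0 := rfl

theorem UJ_eq_sum (x : UJ K n) :
    x = ∑ i : Fin n, ∑ j : Fin n, (if h : i ≤ j then x.1 i j • Eu K i j h else 0) := by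
  apply Subtype.ext
  rw [Submodule.coe_sum]
  conv_lhs => rw [Matrix.matrix_eq_sum_single (x.1 : Matrix (Fin n) (Fin n) K)]
  refine Finset.sum_congr rfl fun i _ => ?_
  rw [Submodule.coe_sum]
  refine Finset.sum_congr rfl fun j _ => ?_
  by_cases h : i ≤ j
  · rw [dif_pos h]
    rw [Submodule.coe_smul]
    show _ = x.1 i j • (Matrix.single i j (1:K))
    rw [Matrix.smul_single, smul_eq_mul, mul_one]
  · rw [dif_neg h]
    have hji : (j : ℕ) < (i : ℕ) := by
      have : (j:Fin n) < i := lt_of_not_ge h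
      exact this
    rw [x.2 i j hji, Matrix.single_zero]
    rfl
end Basics
section Nilp
variable {K : Type*} [Field K] {n : ℕ}

theorem UTs_one_mem : (1 : Matrix (Fin n) (Fin n) K) ∈ UTs K n := by
  intro i j h
  exact Matrix.one_apply_ne (by intro e; subst e; omega)

theorem UTs_pow_mem {a : Matrix (Fin n) (Fin n) K} (ha : a ∈ UTs K n) (k : ℕ) :
    a ^ k ∈ UTs K n := by
  induction k with
  | zero => simpa using (UTs_one_mem : (1:Matrix (Fin n) (Fin n) K) ∈ UTs K n)
  | succ k ih => rw [pow_succ]; exact UTs_mul_mem ih ha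

theorem diag_pow {a : Matrix (Fin n) (Fin n) K} (ha : a ∈ UTs K n) (k : ℕ) (i : Fin n) :
    (a ^ k) i i = (a i i) ^ k := by
  induction k with
  | zero => simp [Matrix.one_apply_eq]
  | succ k ih =>
    rw [pow_succ, pow_succ, Matrix.mul_apply, Finset.sum_eq_single i]
    · rw [ih]
    · intro c _ hc
      rcases lt_or_ge (c : ℕ) (i : ℕ) with h | h
      · rw [UTs_pow_mem ha k i c h, zero_mul]
      · have : (i : ℕ) < (c : ℕ) := lt_of_le_of_ne h (by
          intro e; exact hc (Fin.ext e.symm))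
        rw [ha c i this, mul_zero]
    · intro h; exact absurd (Finset.mem_univ i) h

theorem jmul_zero_left (x : UJ K n) : jmul 0 x = 0 := by
  apply Subtype.ext
  show (0 : Matrix (Fin n) (Fin n) K) * x.1 + x.1 * 0 = 0
  simp

theorem jpow_coe (x : UJ K n) (k : ℕ) :
    ((jpow x (k + 1) : UJ K n) : Matrix (Fin n) (Fin n) K) = (2 : K) ^ k • (x.1 ^ (k + 1)) := by
  induction k with
  | zero => simp [jpow]
  | succ k ih =>
    show ((jmul (jpow x (k + 1)) x : UJ K n) : Matrix (Fin n) (Fin n) K) = _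
    rw [jmul_coe, ih, smul_mul_assoc, mul_smul_comm, ← pow_succ, ← pow_succ']
    rw [← smul_add, ← two_smul K (x.1 ^ (k+2)), smul_smul, ← pow_succ]

theorem diag_eq_zero_of_jpow (h2 : (2 : K) ≠ 0) (hn : 1 ≤ n) (x : UJ K n)
    (h : jpow x n = 0) : ∀ i : Fin n, x.1 i i = 0 := by
  obtain ⟨m, rfl⟩ : ∃ m, n = m + 1 := ⟨n - 1, by omega⟩
  have h1 : ((jpow x (m + 1) : UJ K (m+1)) : Matrix (Fin (m+1)) (Fin (m+1)) K) = 0 := by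
    rw [h]; rfl
  rw [jpow_coe] at h1
  have hx : x.1 ^ (m + 1) = 0 := by
    rcases smul_eq_zero.mp h1 with h' | h'
    · exact absurd h' (pow_ne_zero _ h2)
    · exact h'
  intro i
  have hd := diag_pow x.2 (m + 1) i
  rw [hx] at hd
  have : (x.1 i i) ^ (m + 1) = 0 := by rw [← hd]; rfl
  exact pow_eq_zero_iff (Nat.succ_ne_zero m) |>.mp this

theorem jmul_Eu_eq_zero {i1 j1 i2 j2 : Fin n} (h1 : i1 ≤ j1) (h2 : i2 ≤ j2)
    (ha : j1 ≠ i2) (hb : j2 ≠ i1) :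
    jmul (Eu K i1 j1 h1) (Eu K i2 j2 h2) = 0 := by
  apply Subtype.ext
  rw [jmul_coe]
  show Matrix.single i1 j1 1 * Matrix.single i2 j2 1 +
    Matrix.single i2 j2 1 * Matrix.single i1 j1 1 = 0
  rw [Matrix.single_mul_single_of_ne (h := ha), Matrix.single_mul_single_of_ne (h := hb),
    add_zero]

theorem jpow_Eu_eq_zero {i j : Fin n} (h : i ≤ j) (hne : i ≠ j) (k : ℕ) (hk : 2 ≤ k) :
    jpow (Eu K i j h) k = 0 := by
  induction k with
  | zero => omega
  | succ k ih =>
    rcases Nat.lt_or_ge k 2 with hk2 | hk2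
    · have : k = 1 := by omega
      subst this
      show jmul (jpow (Eu K i j h) 1) (Eu K i j h) = 0
      show jmul (Eu K i j h) (Eu K i j h) = 0
      exact jmul_Eu_eq_zero h h hne.symm hne.symm
    · obtain ⟨l, rfl⟩ : ∃ l, k = l + 1 := ⟨k - 1, by omega⟩
      show jmul (jpow (Eu K i j h) (l + 1)) (Eu K i j h) = 0
      rw [ih hk2]
      exact jmul_zero_left _
end Nilp
section Entries
variable {K : Type*} [Field K] {n : ℕ}

theorem su_entry_le {x : UJ K n} (hx : ∀ a : Fin n, x.1 a a = 0) {i j : Fin n}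
    (h : (j : ℕ) ≤ (i : ℕ)) : x.1 i j = 0 := by
  rcases Nat.lt_or_ge (j : ℕ) (i : ℕ) with h' | h'
  · exact x.2 i j h'
  · have : i = j := Fin.ext (by omega)
    subst this; exact hx i

theorem su_mul_entry_le {x y : UJ K n} (hx : ∀ a : Fin n, x.1 a a = 0)
    (hy : ∀ a : Fin n, y.1 a a = 0) {i j : Fin n} (h : (j : ℕ) ≤ (i : ℕ) + 1) :
    (x.1 * y.1) i j = 0 := by
  rw [Matrix.mul_apply]
  apply Finset.sum_eq_zero
  intro c _
  rcases Nat.lt_or_ge (i : ℕ) (c : ℕ) with h' | h'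
  · rw [su_entry_le hy (by omega), mul_zero]
  · rw [su_entry_le hx h', zero_mul]

theorem jmul_entry_le {x y : UJ K n} (hx : ∀ a : Fin n, x.1 a a = 0)
    (hy : ∀ a : Fin n, y.1 a a = 0) {i j : Fin n} (h : (j : ℕ) ≤ (i : ℕ) + 1) :
    (jmul x y).1 i j = 0 := by
  rw [jmul_coe]
  show (x.1 * y.1) i j + (y.1 * x.1) i j = 0
  rw [su_mul_entry_le hx hy h, su_mul_entry_le hy hx h, add_zero]

theorem su_mul_entry_two {x y : UJ K n} (hx : ∀ a : Fin n, x.1 a a = 0)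
    (hy : ∀ a : Fin n, y.1 a a = 0) {i c j : Fin n} (hc : (c : ℕ) = (i : ℕ) + 1)
    (hj : (j : ℕ) = (i : ℕ) + 2) :
    (x.1 * y.1) i j = x.1 i c * y.1 c j := by
  rw [Matrix.mul_apply]
  apply Finset.sum_eq_single_of_mem c (Finset.mem_univ c)
  intro d _ hd
  have hd' : (d : ℕ) ≠ (i : ℕ) + 1 := fun e => hd (Fin.ext (by omega))
  rcases Nat.lt_or_ge ((i : ℕ) + 1) (d : ℕ) with h' | h'
  · rw [su_entry_le hy (by omega), mul_zero]
  · rw [su_entry_le hx (by omega), zero_mul]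

theorem jmul_entry_two {x y : UJ K n} (hx : ∀ a : Fin n, x.1 a a = 0)
    (hy : ∀ a : Fin n, y.1 a a = 0) {i c j : Fin n} (hc : (c : ℕ) = (i : ℕ) + 1)
    (hj : (j : ℕ) = (i : ℕ) + 2) :
    (jmul x y).1 i j = x.1 i c * y.1 c j + y.1 i c * x.1 c j := by
  rw [jmul_coe]
  show (x.1 * y.1) i j + (y.1 * x.1) i j = _
  rw [su_mul_entry_two hx hy hc hj, su_mul_entry_two hy hx hc hj]

/-- The submodule of matrices vanishing on the diagonal and first superdiagonal. -/
def U2 (K : Type*) [Field K] (n : ℕ) : Submodule K (UJ K n) where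
  carrier := {x | ∀ i j : Fin n, (j : ℕ) ≤ (i : ℕ) + 1 → x.1 i j = 0}
  add_mem' := by
    intro a b ha hb i j h
    show a.1 i j + b.1 i j = 0
    rw [ha i j h, hb i j h, add_zero]
  zero_mem' := by intro i j h; rfl
  smul_mem' := by
    intro c a ha i j h
    show c * a.1 i j = 0
    rw [ha i j h, mul_zero]

theorem jmul_mem_U2 {x y : UJ K n} (hx : ∀ a : Fin n, x.1 a a = 0)
    (hy : ∀ a : Fin n, y.1 a a = 0) : jmul x y ∈ U2 K n :=
  fun i j h => jmul_entry_le hx hy h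

theorem Eu_decomp {a c b : Fin n} (h1 : (c : ℕ) = (a : ℕ) + 1) (h2 : (c : ℕ) < (b : ℕ)) :
    Eu K a b (by omega) = jmul (Eu K a c (by omega)) (Eu K c b (by omega)) := by
  apply Subtype.ext
  rw [jmul_coe]
  show Matrix.single a b (1:K) =
    Matrix.single a c 1 * Matrix.single c b 1 +
    Matrix.single c b 1 * Matrix.single a c 1
  rw [Matrix.single_mul_single_same, Matrix.single_mul_single_of_ne
    (h := fun e : b = a => by have := e ▸ h2; omega), add_zero, mul_one]

theorem mem_U2_iff {x : UJ K n} :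
    x ∈ U2 K n ↔ ∀ i j : Fin n, (j : ℕ) ≤ (i : ℕ) + 1 → x.1 i j = 0 := Iff.rfl

theorem U2_le_span :
    U2 K n ≤ Submodule.span K {x : UJ K n |
      ∃ (i j : Fin n) (h : i ≤ j), (i : ℕ) + 2 ≤ (j : ℕ) ∧ x = Eu K i j h} := by
  intro x hx
  rw [UJ_eq_sum x]
  apply Submodule.sum_mem
  intro i _
  apply Submodule.sum_mem
  intro j _
  by_cases h : i ≤ j
  · rw [dif_pos h]
    rcases Nat.lt_or_ge ((j : ℕ)) ((i : ℕ) + 2) with h' | h'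
    · rw [hx i j (by omega), zero_smul]
      exact Submodule.zero_mem _
    · exact Submodule.smul_mem _ _ (Submodule.subset_span ⟨i, j, h, h', rfl⟩)
  · { rw [dif_neg h]; exact Submodule.zero_mem _ }
end Entries

section Deg
variable {K : Type*} [Field K] {n : ℕ} {G : Type*} [CommGroup G]

/-- `η` extended to `ℕ` by `1`. -/
def padF {n : ℕ} (G : Type*) [CommGroup G] (η : Fin (n - 1) → G) (v : ℕ) : G :=
  if h : v < n - 1 then η ⟨v, h⟩ else 1

theorem elemDeg_eq (η : Fin (n - 1) → G) (i j : Fin n) :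
    elemDeg G η i j = ∏ k ∈ Finset.Ico (i : ℕ) (j : ℕ), padF G η k := by
  rw [elemDeg, ← Finset.prod_attach (Finset.Ico (i:ℕ) (j:ℕ)) (fun k => padF G η k)]
  apply Finset.prod_congr rfl
  intro k _
  have hk := Finset.mem_Ico.mp k.2
  have hj := j.isLt
  rw [padF, dif_pos (by omega)]

theorem elemDeg_single (η : Fin (n - 1) → G) {i j : Fin n} (h : (j : ℕ) = (i : ℕ) + 1) :
    elemDeg G η i j = padF G η (i : ℕ) := by
  rw [elemDeg_eq, h, Nat.Ico_succ_singleton, Finset.prod_singleton]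

theorem Eu_mem_elemComp (η : Fin (n - 1) → G) (i j : Fin n) (h : i ≤ j) :
    Eu K i j h ∈ elemComp K η (elemDeg G η i j) :=
  Submodule.subset_span ⟨i, j, h, rfl, rfl⟩

theorem elemComp_support (η : Fin (n - 1) → G) (g : G) {x : UJ K n}
    (hx : x ∈ elemComp K η g) :
    ∀ i j : Fin n, i ≤ j → elemDeg G η i j ≠ g → x.1 i j = 0 := by
  let M : Submodule K (UJ K n) :=
    { carrier := {x | ∀ i j : Fin n, i ≤ j → elemDeg G η i j ≠ g → x.1 i j = 0}
      add_mem' := by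
        intro a b ha hb i j hij hne
        show a.1 i j + b.1 i j = 0
        rw [ha i j hij hne, hb i j hij hne, add_zero]
      zero_mem' := by intro i j hij hne; rfl
      smul_mem' := by
        intro c a ha i j hij hne
        show c * a.1 i j = 0
        rw [ha i j hij hne, mul_zero] }
  have hspan : elemComp K η g ≤ M := by
    rw [elemComp, Submodule.span_le]
    rintro x ⟨i0, j0, h0, hdeg0, rfl⟩
    intro i j hij hne
    rw [Eu_apply]
    by_cases he : i0 = i ∧ j0 = j
    · exfalso; rcases he with ⟨rfl, rfl⟩; exact hne hdeg0
    · rw [if_neg he]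
  exact hspan hx
end Deg
section Flip
variable {K : Type*} [Field K] {n : ℕ}

/-- Reflection along the antidiagonal. -/
def flipM (M : Matrix (Fin n) (Fin n) K) : Matrix (Fin n) (Fin n) K :=
  Matrix.of fun a b => M b.rev a.rev

theorem flipM_mem {M : Matrix (Fin n) (Fin n) K} (hM : M ∈ UTs K n) : flipM M ∈ UTs K n := by
  intro i j h
  show M j.rev i.rev = 0
  apply hM
  rw [Fin.val_rev, Fin.val_rev]
  have hi := i.isLt; have hj := j.isLt
  omega

/-- The flip as a linear equivalence of `UJ K n`. -/
def flipL (K : Type*) [Field K] (n : ℕ) : UJ K n ≃ₗ[K] UJ K n where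
  toFun x := ⟨flipM x.1, flipM_mem x.2⟩
  invFun x := ⟨flipM x.1, flipM_mem x.2⟩
  left_inv x := Subtype.ext (by
    ext a b
    show x.1 a.rev.rev b.rev.rev = x.1 a b
    rw [Fin.rev_rev, Fin.rev_rev])
  right_inv x := Subtype.ext (by
    ext a b
    show x.1 a.rev.rev b.rev.rev = x.1 a b
    rw [Fin.rev_rev, Fin.rev_rev])
  map_add' x y := Subtype.ext (by ext a b; rfl)
  map_smul' c x := Subtype.ext (by ext a b; rfl)

theorem flipL_entry (x : UJ K n) (a b : Fin n) :
    ((flipL K n x : UJ K n) : Matrix (Fin n) (Fin n) K) a b = x.1 b.rev a.rev := rfl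

theorem flip_jmul (x y : UJ K n) : flipL K n (jmul x y) = jmul (flipL K n x) (flipL K n y) := by
  apply Subtype.ext
  ext a b
  rw [flipL_entry, jmul_coe, jmul_coe]
  show (x.1 * y.1) b.rev a.rev + (y.1 * x.1) b.rev a.rev =
    ((flipL K n x).1 * (flipL K n y).1) a b + ((flipL K n y).1 * (flipL K n x).1) a b
  simp only [Matrix.mul_apply]
  have h1 : ∀ u w : UJ K n, (∑ c, (flipL K n u).1 a c * (flipL K n w).1 c b)
      = ∑ c, w.1 b.rev c * u.1 c a.rev := by
    intro u w
    rw [← Equiv.sum_comp (Fin.revPerm : Equiv.Perm (Fin n))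
      (fun c => w.1 b.rev c * u.1 c a.rev)]
    apply Finset.sum_congr rfl
    intro c _
    rw [flipL_entry, flipL_entry]
    exact mul_comm _ _
  rw [h1 x y, h1 y x, add_comm]

theorem Eu_congr {i i' j j' : Fin n} {h : i ≤ j} {h' : i' ≤ j'} (e1 : i = i') (e2 : j = j') :
    Eu K i j h = Eu K i' j' h' := by subst e1; subst e2; rfl

theorem flip_Eu (i j : Fin n) (h : i ≤ j) :
    flipL K n (Eu K i j h) = Eu K j.rev i.rev (Fin.rev_le_rev.mpr h) := by
  apply Subtype.ext
  ext a b
  rw [flipL_entry, Eu_apply, Eu_apply]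
  apply if_congr _ rfl rfl
  constructor
  · rintro ⟨rfl, rfl⟩; rw [Fin.rev_rev, Fin.rev_rev]; exact ⟨rfl, rfl⟩
  · rintro ⟨rfl, rfl⟩; rw [Fin.rev_rev, Fin.rev_rev]; exact ⟨rfl, rfl⟩
end Flip

section Backward
variable {K : Type*} [Field K] {n : ℕ} {G : Type*} [CommGroup G]

theorem elemDeg_flip (η η' : Fin (n - 1) → G) (hrev : η = η' ∘ Fin.rev) (i j : Fin n) :
    elemDeg G η' j.rev i.rev = elemDeg G η i j := by
  rw [elemDeg_eq, elemDeg_eq, Fin.val_rev, Fin.val_rev]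
  have hi := i.isLt; have hj := j.isLt
  apply Finset.prod_nbij' (fun k => n - 2 - k) (fun k => n - 2 - k)
  · intro a ha
    have := Finset.mem_Ico.mp ha
    rw [Finset.mem_Ico]
    omega
  · intro a ha
    have := Finset.mem_Ico.mp ha
    rw [Finset.mem_Ico]
    omega
  · intro a ha
    have := Finset.mem_Ico.mp ha
    omega
  · intro a ha
    have := Finset.mem_Ico.mp ha
    omega
  · intro a ha
    have ha' := Finset.mem_Ico.mp ha
    have h1 : a < n - 1 := by omega
    have h2 : n - 2 - a < n - 1 := by omega
    rw [padF, padF, dif_pos h1, dif_pos h2]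
    have : η ⟨n - 2 - a, h2⟩ = η' (Fin.rev ⟨n - 2 - a, h2⟩) := by rw [hrev]; rfl
    rw [this]
    congr 1
    apply Fin.ext
    rw [Fin.val_rev]
    show a = n - 1 - (n - 2 - a + 1)
    omega

theorem flip_map_elemComp (η η' : Fin (n - 1) → G) (hrev : η = η' ∘ Fin.rev) (g : G) :
    (elemComp K η g).map ((flipL K n : UJ K n ≃ₗ[K] UJ K n) : UJ K n →ₗ[K] UJ K n)
      = elemComp K η' g := by
  have hrev' : η' = η ∘ Fin.rev := by
    rw [hrev]; funext k; show η' k = η' (Fin.rev (Fin.rev k)); rw [Fin.rev_rev]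
  rw [elemComp, elemComp, Submodule.map_span]
  apply le_antisymm
  · rw [Submodule.span_le]
    rintro y ⟨x, ⟨i, j, hij, hdeg, rfl⟩, rfl⟩
    show ((flipL K n) (Eu K i j hij) : UJ K n) ∈ _
    rw [flip_Eu]
    exact Submodule.subset_span
      ⟨j.rev, i.rev, Fin.rev_le_rev.mpr hij, by rw [elemDeg_flip η η' hrev i j, hdeg], rfl⟩
  · rw [Submodule.span_le]
    rintro x ⟨i, j, hij, hdeg, rfl⟩
    apply Submodule.subset_span
    refine ⟨Eu K j.rev i.rev (Fin.rev_le_rev.mpr hij),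
      ⟨j.rev, i.rev, Fin.rev_le_rev.mpr hij, ?_, rfl⟩, ?_⟩
    · rw [elemDeg_flip η' η hrev' i j]
      exact hdeg
    · show (flipL K n) (Eu K j.rev i.rev _) = _
      rw [flip_Eu]
      exact Eu_congr (Fin.rev_rev i) (Fin.rev_rev j)
end Backward
section Comb

theorem comb {K : Type*} [Field K] {G : Type*} (h2 : (2 : K) ≠ 0) (m : ℕ) (hm : 1 ≤ m)
    (η η' : ℕ → G) (c c' : ℕ → ℕ → K)
    (hcc' : ∀ a i, a < m → i < m →
      (∑ k ∈ Finset.range m, c a k * c' k i) = if a = i then 1 else 0)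
    (hc'c : ∀ a i, a < m → i < m →
      (∑ k ∈ Finset.range m, c' a k * c k i) = if a = i then 1 else 0)
    (hD : ∀ i k l, i + 1 < m → k < m → l < m → ¬(l = k + 1 ∨ k = l + 1) →
        c i k * c (i + 1) l + c i l * c (i + 1) k = 0)
    (hdeg : ∀ i k, i < m → k < m → c i k ≠ 0 → η' i = η k) :
    (∀ i, i < m → η i = η' i) ∨ (∀ i, i < m → η i = η' (m - 1 - i)) := by
  have hA : ∀ i k l, i + 1 < m → k < m → l < m → c i k ≠ 0 → c (i + 1) l ≠ 0 →
      (l = k + 1 ∨ k = l + 1) := by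
    intro i k l h1 hk hl hck hcl
    by_contra hno
    have h0 := hD i k l h1 hk hl hno
    have hkk := hD i k k h1 hk hk (by omega)
    have hz : c i k * c (i + 1) k = 0 := by
      have h2x : (2 : K) * (c i k * c (i + 1) k) = 0 := by rw [two_mul]; exact hkk
      rcases mul_eq_zero.mp h2x with h | h
      · exact absurd h h2
      · exact h
    have hz2 : c (i + 1) k = 0 := by
      rcases mul_eq_zero.mp hz with h | h
      · exact absurd h hck
      · exact h
    rw [hz2, mul_zero, add_zero] at h0
    rcases mul_eq_zero.mp h0 with h | h
    · exact hck h
    · exact hcl h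
  have hA2 : ∀ i j k l, j = i + 1 → j < m → k < m → l < m → c i k ≠ 0 → c j l ≠ 0 →
      (l = k + 1 ∨ k = l + 1) := by
    intro i j k l hj hjm hk hl hci hcj
    subst hj
    exact hA i k l hjm hk hl hci hcj
  have hrow : ∀ i, i < m → ∃ k, k < m ∧ c i k ≠ 0 := by
    intro i hi
    by_contra hno
    push_neg at hno
    have hs := hcc' i i hi hi
    rw [if_pos rfl] at hs
    have hz : (∑ k ∈ Finset.range m, c i k * c' k i) = 0 := by
      apply Finset.sum_eq_zero
      intro k hk
      rw [hno k (Finset.mem_range.mp hk), zero_mul]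
    rw [hz] at hs
    exact one_ne_zero hs.symm
  have hcol : ∀ k, k < m → ∃ i, i < m ∧ c i k ≠ 0 := by
    intro k hk
    have hs := hc'c k k hk hk
    rw [if_pos rfl] at hs
    have hne : (∑ j ∈ Finset.range m, c' k j * c j k) ≠ 0 := by
      rw [hs]; exact one_ne_zero
    obtain ⟨j, hj, hne'⟩ := Finset.exists_ne_zero_of_sum_ne_zero hne
    exact ⟨j, Finset.mem_range.mp hj, fun h => hne' (by rw [h, mul_zero])⟩
  have hF3 : ∀ i j b, i < m → j < m → b < m → i ≠ j →
      (∀ k, k < m → c i k ≠ 0 → k = b) → (∀ k, k < m → c j k ≠ 0 → k = b) → False := by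
    intro i j b hi hj hb hij hsi hsj
    have key : ∀ a, a < m → (∀ k, k < m → c a k ≠ 0 → k = b) → ∀ t, t < m →
        (∑ k ∈ Finset.range m, c a k * c' k t) = c a b * c' b t := by
      intro a ha hsa t ht
      apply Finset.sum_eq_single_of_mem b (Finset.mem_range.mpr hb)
      intro k hk hkb
      rcases eq_or_ne (c a k) 0 with h | h
      · rw [h, zero_mul]
      · exact absurd (hsa k (Finset.mem_range.mp hk) h) hkb
    have e1 : c i b * c' b i = 1 := by
      rw [← key i hi hsi i hi, hcc' i i hi hi, if_pos rfl]
    have e2 : c j b * c' b j = 1 := by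
      rw [← key j hj hsj j hj, hcc' j j hj hj, if_pos rfl]
    have e3 : c i b * c' b j = 0 := by
      rw [← key i hi hsi j hj, hcc' i j hi hj, if_neg hij]
    have hib : c i b ≠ 0 := fun h => by rw [h, zero_mul] at e1; exact one_ne_zero e1.symm
    have hbj : c' b j = 0 := by
      rcases mul_eq_zero.mp e3 with h | h
      · exact absurd h hib
      · exact h
    rw [hbj, mul_zero] at e2
    exact one_ne_zero e2.symm
  -- m = 1
  rcases Nat.lt_or_ge m 2 with hm2 | hm2
  · left
    intro i hi
    have hi0 : i = 0 := by omega
    subst hi0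
    obtain ⟨k, hk, hck⟩ := hrow 0 (by omega)
    have hk0 : k = 0 := by omega
    subst hk0
    exact (hdeg 0 0 (by omega) (by omega) hck).symm
  -- m = 2
  rcases Nat.lt_or_ge m 3 with hm3 | hm3
  · obtain ⟨k0, hk0, hc0⟩ := hrow 0 (by omega)
    obtain ⟨k1, hk1, hc1⟩ := hrow 1 (by omega)
    have hadj := hA2 0 1 k0 k1 (by omega) (by omega) hk0 hk1 hc0 hc1
    rcases hadj with h | h
    · have e0 : k0 = 0 := by omega
      have e1 : k1 = 1 := by omega
      subst e0; subst e1
      left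
      intro i hi
      have : i = 0 ∨ i = 1 := by omega
      rcases this with rfl | rfl
      · exact (hdeg 0 0 (by omega) (by omega) hc0).symm
      · exact (hdeg 1 1 (by omega) (by omega) hc1).symm
    · have e0 : k0 = 1 := by omega
      have e1 : k1 = 0 := by omega
      subst e0; subst e1
      right
      intro i hi
      have : i = 0 ∨ i = 1 := by omega
      rcases this with rfl | rfl
      · rw [show m - 1 - 0 = 1 by omega]
        exact (hdeg 1 0 (by omega) (by omega) hc1).symm
      · rw [show m - 1 - 1 = 0 by omega]
        exact (hdeg 0 1 (by omega) (by omega) hc0).symm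
  -- m ≥ 3 : interior rows have a single nonzero column
  have hsing : ∀ i k l, 1 ≤ i → i + 1 < m → k < m → l < m →
      c i k ≠ 0 → c i l ≠ 0 → k = l := by
    intro i k l hi1 him hk hl hck hcl
    by_contra hkl
    obtain ⟨i0, rfl⟩ : ∃ i0, i = i0 + 1 := ⟨i - 1, by omega⟩
    obtain ⟨b, hb, hcb⟩ := hrow (i0 + 2) (by omega)
    have e1 := hA (i0 + 1) k b (by omega) hk hb hck hcb
    have e2 := hA (i0 + 1) l b (by omega) hl hb hcl hcb
    obtain ⟨b', hb', hcb'⟩ := hrow i0 (by omega)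
    have e3 := hA i0 b' k (by omega) hb' hk hcb' hck
    have e4 := hA i0 b' l (by omega) hb' hl hcb' hcl
    have hbb : b' = b := by omega
    have hsub1 : ∀ k', k' < m → c (i0 + 2) k' ≠ 0 → k' = b := by
      intro k' hk' hck'
      have f1 := hA (i0 + 1) k k' (by omega) hk hk' hck hck'
      have f2 := hA (i0 + 1) l k' (by omega) hl hk' hcl hck'
      omega
    have hsub2 : ∀ k', k' < m → c i0 k' ≠ 0 → k' = b := by
      intro k' hk' hck'
      have f1 := hA i0 k' k (by omega) hk' hk hck' hck
      have f2 := hA i0 k' l (by omega) hk' hl hck' hcl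
      omega
    exact hF3 i0 (i0 + 2) b (by omega) (by omega) hb (by omega) hsub2 hsub1
  obtain ⟨f, hf⟩ : ∃ f : ℕ → ℕ, ∀ i, i < m → f i < m ∧ c i (f i) ≠ 0 := by
    refine ⟨fun i => if h : i < m then (hrow i h).choose else 0, fun i h => ?_⟩
    simp only [dif_pos h]
    exact (hrow i h).choose_spec
  have huniq : ∀ i k, 1 ≤ i → i + 1 < m → k < m → c i k ≠ 0 → k = f i := by
    intro i k hi1 him hk hck
    exact hsing i k (f i) hi1 him hk (hf i (by omega)).1 hck (hf i (by omega)).2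
  have hdist : ∀ i j, 1 ≤ i → i + 1 < m → 1 ≤ j → j + 1 < m → i ≠ j → f i ≠ f j := by
    intro i j hi1 him hj1 hjm hij he
    apply hF3 i j (f i) (by omega) (by omega) (hf i (by omega)).1 hij
    · intro k hk hck; exact huniq i k hi1 him hk hck
    · intro k hk hck; exact (huniq j k hj1 hjm hk hck).trans he.symm
  -- m = 3
  rcases Nat.lt_or_ge m 4 with hm4 | hm4
  · have hm' : m = 3 := by omega
    subst hm'
    have hfb := hf 1 (by omega)
    obtain ⟨iz, hiz, hciz⟩ := hcol 0 (by omega)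
    obtain ⟨it, hit, hcit⟩ := hcol 2 (by omega)
    have hd0 : f 1 = 1 ∨ f 1 = 0 := by
      have h3 : iz = 0 ∨ iz = 1 ∨ iz = 2 := by omega
      rcases h3 with rfl | rfl | rfl
      · have := hA2 0 1 0 (f 1) (by omega) (by omega) (by omega) hfb.1 hciz hfb.2
        omega
      · have := huniq 1 0 (by omega) (by omega) (by omega) hciz
        omega
      · have := hA2 1 2 (f 1) 0 (by omega) (by omega) hfb.1 (by omega) hfb.2 hciz
        omega
    have hd2 : f 1 = 1 ∨ f 1 = 2 := by
      have h3 : it = 0 ∨ it = 1 ∨ it = 2 := by omega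
      rcases h3 with rfl | rfl | rfl
      · have := hA2 0 1 2 (f 1) (by omega) (by omega) (by omega) hfb.1 hcit hfb.2
        omega
      · have := huniq 1 2 (by omega) (by omega) (by omega) hcit
        omega
      · have := hA2 1 2 (f 1) 2 (by omega) (by omega) hfb.1 (by omega) hfb.2 hcit
        omega
    have hb1 : f 1 = 1 := by omega
    have h11 : η' 1 = η 1 := by
      have := hdeg 1 (f 1) (by omega) hfb.1 hfb.2
      rwa [hb1] at this
    have hr0 : ∀ k, k < 3 → c 0 k ≠ 0 → k = 0 ∨ k = 2 := by
      intro k hk hck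
      have := hA2 0 1 k (f 1) (by omega) (by omega) hk hfb.1 hck hfb.2
      omega
    have hr2 : ∀ k, k < 3 → c 2 k ≠ 0 → k = 0 ∨ k = 2 := by
      intro k hk hck
      have := hA2 1 2 (f 1) k (by omega) (by omega) hfb.1 hk hfb.2 hck
      omega
    have hleft : c 0 0 ≠ 0 → c 2 2 ≠ 0 → (∀ i, i < 3 → η i = η' i) := by
      intro p0 p2 i hi
      have : i = 0 ∨ i = 1 ∨ i = 2 := by omega
      rcases this with rfl | rfl | rfl
      · exact (hdeg 0 0 (by omega) (by omega) p0).symm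
      · exact h11.symm
      · exact (hdeg 2 2 (by omega) (by omega) p2).symm
    have hright : c 0 2 ≠ 0 → c 2 0 ≠ 0 → (∀ i, i < 3 → η i = η' (3 - 1 - i)) := by
      intro p0 p2 i hi
      have : i = 0 ∨ i = 1 ∨ i = 2 := by omega
      rcases this with rfl | rfl | rfl
      · rw [show (3:ℕ) - 1 - 0 = 2 by omega]
        exact (hdeg 2 0 (by omega) (by omega) p2).symm
      · rw [show (3:ℕ) - 1 - 1 = 1 by omega]
        exact h11.symm
      · rw [show (3:ℕ) - 1 - 2 = 0 by omega]
        exact (hdeg 0 2 (by omega) (by omega) p0).symm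
    obtain ⟨k0, hk0, hck0⟩ := hrow 0 (by omega)
    obtain ⟨k2, hk2, hck2⟩ := hrow 2 (by omega)
    rcases hr0 k0 hk0 hck0 with rfl | rfl <;> rcases hr2 k2 hk2 hck2 with rfl | rfl
    · by_cases p02 : c 0 2 = 0
      · by_cases p22 : c 2 2 = 0
        · exfalso
          apply hF3 0 2 0 (by omega) (by omega) (by omega) (by omega)
          · intro k hk hck
            rcases hr0 k hk hck with rfl | rfl
            · rfl
            · exact absurd p02 hck
          · intro k hk hck
            rcases hr2 k hk hck with rfl | rfl
            · rfl
            · exact absurd p22 hck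
        · exact Or.inl (hleft hck0 p22)
      · exact Or.inr (hright p02 hck2)
    · exact Or.inl (hleft hck0 hck2)
    · exact Or.inr (hright hck0 hck2)
    · by_cases p00 : c 0 0 = 0
      · by_cases p20 : c 2 0 = 0
        · exfalso
          apply hF3 0 2 2 (by omega) (by omega) (by omega) (by omega)
          · intro k hk hck
            rcases hr0 k hk hck with rfl | rfl
            · exact absurd p00 hck
            · rfl
          · intro k hk hck
            rcases hr2 k hk hck with rfl | rfl
            · exact absurd p20 hck
            · rfl
        · exact Or.inr (hright hck0 p20)
      · exact Or.inl (hleft p00 hck2)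
  -- m ≥ 4
  have hstep : ∀ i j, j = i + 1 → 1 ≤ i → j + 1 < m → (f j = f i + 1 ∨ f i = f j + 1) := by
    intro i j hj hi1 hjm
    subst hj
    exact hA i (f i) (f (i + 1)) (by omega) (hf i (by omega)).1 (hf (i + 1) (by omega)).1
      (hf i (by omega)).2 (hf (i + 1) (by omega)).2
  rcases hstep 1 2 (by omega) (by omega) (by omega) with hcA | hcB
  · -- increasing case
    have hQ : ∀ i, 1 ≤ i → (i + 1 < m → (f i = f 1 + (i - 1) ∧ (i + 2 < m → f (i + 1) = f i + 1))) := by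
      intro i hi1
      induction i, hi1 using Nat.le_induction with
      | base =>
        intro _
        refine ⟨by omega, fun _ => hcA⟩
      | succ i hi1 ih =>
        intro him
        obtain ⟨ih1, ih2⟩ := ih (by omega)
        have ih2' := ih2 (by omega)
        refine ⟨by omega, fun hm2' => ?_⟩
        rcases hstep (i + 1) (i + 2) (by omega) (by omega) (by omega) with h | h
        · exact h
        · exfalso
          have hne := hdist i (i + 2) (by omega) (by omega) (by omega) (by omega) (by omega)
          omega
    have hfa : ∀ i, 1 ≤ i → i + 1 < m → f i = f 1 + (i - 1) :=
      fun i hi1 him => (hQ i hi1 him).1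
    obtain ⟨iz, hiz, hciz⟩ := hcol 0 (by omega)
    obtain ⟨it, hit, hcit⟩ := hcol (m - 1) (by omega)
    have Dz : (iz = 0 ∧ f 1 = 1) ∨ f 1 = 0 := by
      have h3 : iz = 0 ∨ (1 ≤ iz ∧ iz + 1 < m) ∨ iz = m - 1 := by omega
      rcases h3 with rfl | hint | rfl
      · left
        have := hA2 0 1 0 (f 1) (by omega) (by omega) (by omega) (hf 1 (by omega)).1
          hciz (hf 1 (by omega)).2
        omega
      · right
        have h1 := huniq iz 0 hint.1 hint.2 (by omega) hciz
        have h2 := hfa iz hint.1 hint.2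
        omega
      · right
        have h1 := hA2 (m - 2) (m - 1) (f (m - 2)) 0 (by omega) (by omega)
          (hf (m - 2) (by omega)).1 (by omega) (hf (m - 2) (by omega)).2 hciz
        have h2 := hfa (m - 2) (by omega) (by omega)
        omega
    have Dt : (it = m - 1 ∧ f 1 = 1) ∨ f 1 = m - 2 ∨ 2 ≤ f 1 := by
      have h3 : it = 0 ∨ (1 ≤ it ∧ it + 1 < m) ∨ it = m - 1 := by omega
      rcases h3 with rfl | hint | rfl
      · right; left
        have := hA2 0 1 (m - 1) (f 1) (by omega) (by omega) (by omega) (hf 1 (by omega)).1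
          hcit (hf 1 (by omega)).2
        have hfm := (hf 1 (by omega)).1
        omega
      · right; right
        have h1 := huniq it (m - 1) hint.1 hint.2 (by omega) hcit
        have h2 := hfa it hint.1 hint.2
        omega
      · left
        have h1 := hA2 (m - 2) (m - 1) (f (m - 2)) (m - 1) (by omega) (by omega)
          (hf (m - 2) (by omega)).1 (by omega) (hf (m - 2) (by omega)).2 hcit
        have h2 := hfa (m - 2) (by omega) (by omega)
        have hfm := (hf (m - 2) (by omega)).1
        omega
    have hf1 : f 1 = 1 := by omega
    have hizz : iz = 0 := by omega
    have hitt : it = m - 1 := by omega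
    subst hizz; subst hitt
    left
    intro i hi
    have h3 : i = 0 ∨ (1 ≤ i ∧ i + 1 < m) ∨ i = m - 1 := by omega
    rcases h3 with rfl | hint | rfl
    · exact (hdeg 0 0 (by omega) (by omega) hciz).symm
    · have hd := hdeg i (f i) (by omega) (hf i (by omega)).1 (hf i (by omega)).2
      have hfi : f i = i := by
        have := hfa i hint.1 hint.2
        omega
      rw [hfi] at hd
      exact hd.symm
    · exact (hdeg (m - 1) (m - 1) (by omega) (by omega) hcit).symm
  · -- decreasing case
    have hQ : ∀ i, 1 ≤ i → (i + 1 < m → (f i + (i - 1) = f 1 ∧ (i + 2 < m → f i = f (i + 1) + 1))) := by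
      intro i hi1
      induction i, hi1 using Nat.le_induction with
      | base =>
        intro _
        refine ⟨by omega, fun _ => hcB⟩
      | succ i hi1 ih =>
        intro him
        obtain ⟨ih1, ih2⟩ := ih (by omega)
        have ih2' := ih2 (by omega)
        refine ⟨by omega, fun hm2' => ?_⟩
        rcases hstep (i + 1) (i + 2) (by omega) (by omega) (by omega) with h | h
        · exfalso
          have hne := hdist i (i + 2) (by omega) (by omega) (by omega) (by omega) (by omega)
          omega
        · exact h
    have hfa : ∀ i, 1 ≤ i → i + 1 < m → f i + (i - 1) = f 1 :=
      fun i hi1 him => (hQ i hi1 him).1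
    obtain ⟨iz, hiz, hciz⟩ := hcol 0 (by omega)
    obtain ⟨it, hit, hcit⟩ := hcol (m - 1) (by omega)
    have Dz : (iz = m - 1 ∧ f 1 = m - 2) ∨ f 1 = 1 ∨ f 1 + 3 ≤ m := by
      have h3 : iz = 0 ∨ (1 ≤ iz ∧ iz + 1 < m) ∨ iz = m - 1 := by omega
      rcases h3 with rfl | hint | rfl
      · right; left
        have := hA2 0 1 0 (f 1) (by omega) (by omega) (by omega) (hf 1 (by omega)).1
          hciz (hf 1 (by omega)).2
        omega
      · right; right
        have h1 := huniq iz 0 hint.1 hint.2 (by omega) hciz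
        have h2 := hfa iz hint.1 hint.2
        omega
      · left
        have h1 := hA2 (m - 2) (m - 1) (f (m - 2)) 0 (by omega) (by omega)
          (hf (m - 2) (by omega)).1 (by omega) (hf (m - 2) (by omega)).2 hciz
        have h2 := hfa (m - 2) (by omega) (by omega)
        omega
    have Dt : (it = 0 ∧ f 1 = m - 2) ∨ f 1 = m - 1 ∨ f 1 + 5 = 2 * m := by
      have h3 : it = 0 ∨ (1 ≤ it ∧ it + 1 < m) ∨ it = m - 1 := by omega
      rcases h3 with rfl | hint | rfl
      · left
        have := hA2 0 1 (m - 1) (f 1) (by omega) (by omega) (by omega) (hf 1 (by omega)).1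
          hcit (hf 1 (by omega)).2
        have hfm := (hf 1 (by omega)).1
        omega
      · right; left
        have h1 := huniq it (m - 1) hint.1 hint.2 (by omega) hcit
        have h2 := hfa it hint.1 hint.2
        have hfm := (hf 1 (by omega)).1
        omega
      · right; right
        have h1 := hA2 (m - 2) (m - 1) (f (m - 2)) (m - 1) (by omega) (by omega)
          (hf (m - 2) (by omega)).1 (by omega) (hf (m - 2) (by omega)).2 hcit
        have h2 := hfa (m - 2) (by omega) (by omega)
        omega
    have hfm1 : f 1 < m := (hf 1 (by omega)).1
    have hf1 : f 1 = m - 2 := by omega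
    have hizz : iz = m - 1 := by omega
    have hitt : it = 0 := by omega
    subst hizz; subst hitt
    right
    intro i hi
    have h3 : i = 0 ∨ (1 ≤ i ∧ i + 1 < m) ∨ i = m - 1 := by omega
    rcases h3 with rfl | hint | rfl
    · rw [show m - 1 - 0 = m - 1 by omega]
      exact (hdeg (m - 1) 0 (by omega) (by omega) hciz).symm
    · have hd := hdeg (m - 1 - i) (f (m - 1 - i)) (by omega)
        (hf (m - 1 - i) (by omega)).1 (hf (m - 1 - i) (by omega)).2
      have hfi : f (m - 1 - i) = i := by
        have := hfa (m - 1 - i) (by omega) (by omega)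
        omega
      rw [hfi] at hd
      exact hd.symm
    · rw [show m - 1 - (m - 1) = 0 by omega]
      exact (hdeg 0 (m - 1) (by omega) (by omega) hcit).symm

end Comb
section Extract
variable {K : Type*} [Field K] {n : ℕ}

/-- The superdiagonal matrix unit `e_{k,k+1}`. -/
def EN (K : Type*) [Field K] {n : ℕ} (k : ℕ) (hk : k + 1 < n) : UJ K n :=
  Eu K ⟨k, by omega⟩ ⟨k + 1, hk⟩ (Fin.mk_le_mk.mpr (by omega))

theorem EN_entry (k : ℕ) (hk : k + 1 < n) (p q : Fin n) :
    (EN K k hk).1 p q = if (p : ℕ) = k ∧ (q : ℕ) = k + 1 then 1 else 0 := by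
  rw [EN, Eu_apply]
  apply if_congr _ rfl rfl
  constructor
  · rintro ⟨rfl, rfl⟩; exact ⟨rfl, rfl⟩
  · rintro ⟨h1, h2⟩; exact ⟨Fin.ext h1.symm, Fin.ext h2.symm⟩

theorem entry_of_sum {ι : Type*} (s : Finset ι) (g : ι → UJ K n) (p q : Fin n) :
    ((∑ x ∈ s, g x : UJ K n) : Matrix (Fin n) (Fin n) K) p q = ∑ x ∈ s, (g x).1 p q := by
  rw [Submodule.coe_sum, Matrix.sum_apply]

theorem psi_jpow (ψ : UJ K n ≃ₗ[K] UJ K n)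
    (hj : ∀ x y, ψ (jmul x y) = jmul (ψ x) (ψ y)) (x : UJ K n) (k : ℕ) :
    ψ (jpow x k) = jpow (ψ x) k := by
  induction k with
  | zero => show ψ 0 = 0; exact map_zero ψ
  | succ k ih =>
    cases k with
    | zero => rfl
    | succ k' =>
      show ψ (jmul (jpow x (k' + 1)) x) = jmul (jpow (ψ x) (k' + 1)) (ψ x)
      rw [hj, ih]

theorem psi_su (hn : 2 ≤ n) (h2 : (2 : K) ≠ 0) (ψ : UJ K n ≃ₗ[K] UJ K n)
    (hj : ∀ x y, ψ (jmul x y) = jmul (ψ x) (ψ y)) {a b : Fin n} (h : a ≤ b) (hab : a ≠ b) :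
    ∀ t : Fin n, (ψ (Eu K a b h)).1 t t = 0 := by
  apply diag_eq_zero_of_jpow h2 (by omega)
  rw [← psi_jpow ψ hj, jpow_Eu_eq_zero h hab n hn, map_zero]

theorem psi_EN_su (hn : 2 ≤ n) (h2 : (2 : K) ≠ 0) (ψ : UJ K n ≃ₗ[K] UJ K n)
    (hj : ∀ x y, ψ (jmul x y) = jmul (ψ x) (ψ y)) (k : ℕ) (hk : k + 1 < n) :
    ∀ t : Fin n, (ψ (EN K k hk)).1 t t = 0 :=
  psi_su hn h2 ψ hj _ (fun e => by
    have : (k : ℕ) = k + 1 := congrArg Fin.val e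
    omega)

theorem Eu_decomp2 {a c b : Fin n} (hab : a ≤ b) (h1 : (c : ℕ) = (a : ℕ) + 1)
    (h2 : (c : ℕ) < (b : ℕ)) :
    Eu K a b hab = jmul (Eu K a c (by omega)) (Eu K c b (by omega)) :=
  (Eu_congr rfl rfl).trans (Eu_decomp h1 h2)

theorem psi_U2 (hn : 2 ≤ n) (h2 : (2 : K) ≠ 0) (ψ : UJ K n ≃ₗ[K] UJ K n)
    (hj : ∀ x y, ψ (jmul x y) = jmul (ψ x) (ψ y)) {x : UJ K n} (hx : x ∈ U2 K n) :
    ψ x ∈ U2 K n := by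
  have hle : Submodule.span K {x : UJ K n |
      ∃ (i j : Fin n) (h : i ≤ j), (i : ℕ) + 2 ≤ (j : ℕ) ∧ x = Eu K i j h}
      ≤ (U2 K n).comap (ψ : UJ K n →ₗ[K] UJ K n) := by
    rw [Submodule.span_le]
    rintro y ⟨a, b, hab, h2b, rfl⟩
    show ψ (Eu K a b hab) ∈ U2 K n
    have hb := b.isLt
    rw [Eu_decomp2 hab (c := ⟨(a : ℕ) + 1, by omega⟩) rfl (by show (a:ℕ)+1 < (b:ℕ); omega)]
    rw [hj]
    apply jmul_mem_U2
    · exact psi_su hn h2 ψ hj _ (fun e => by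
        have : (a : ℕ) = (a : ℕ) + 1 := congrArg Fin.val e
        omega)
    · exact psi_su hn h2 ψ hj _ (fun e => by
        have : ((⟨(a : ℕ) + 1, by omega⟩ : Fin n) : ℕ) = (b : ℕ) := congrArg Fin.val e
        have : (a : ℕ) + 1 = (b : ℕ) := this
        omega)
  exact hle (U2_le_span hx)

/-- The matrix of first-superdiagonal coefficients of images of superdiagonal units. -/
def cmat (ψ : UJ K n ≃ₗ[K] UJ K n) : ℕ → ℕ → K := fun i k =>
  if h : i + 1 < n ∧ k + 1 < n then
    (ψ (EN K k h.2)).1 ⟨i, by omega⟩ ⟨i + 1, h.1⟩ else 0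

theorem cmat_pos (ψ : UJ K n ≃ₗ[K] UJ K n) {i k : ℕ} (hi : i + 1 < n) (hk : k + 1 < n) :
    cmat ψ i k = (ψ (EN K k hk)).1 ⟨i, by omega⟩ ⟨i + 1, hi⟩ := by
  rw [cmat, dif_pos (⟨hi, hk⟩ : i + 1 < n ∧ k + 1 < n)]

theorem cmat_adj (h2 : (2 : K) ≠ 0) (hn : 2 ≤ n) (ψ : UJ K n ≃ₗ[K] UJ K n)
    (hj : ∀ x y, ψ (jmul x y) = jmul (ψ x) (ψ y))
    (i k l : ℕ) (hi : i + 2 < n) (hk : k + 1 < n) (hl : l + 1 < n)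
    (hno : ¬(l = k + 1 ∨ k = l + 1)) :
    cmat ψ i k * cmat ψ (i + 1) l + cmat ψ i l * cmat ψ (i + 1) k = 0 := by
  push_neg at hno
  have hz : jmul (EN K k hk) (EN K l hl) = 0 :=
    jmul_Eu_eq_zero _ _
      (fun e => hno.1 (by simpa using (congrArg Fin.val e).symm))
      (fun e => hno.2 (by simpa using (congrArg Fin.val e).symm))
  have hz2 : jmul (ψ (EN K k hk)) (ψ (EN K l hl)) = 0 := by
    rw [← hj, hz, map_zero]
  have hE : (jmul (ψ (EN K k hk)) (ψ (EN K l hl))).1 ⟨i, by omega⟩ ⟨i + 2, hi⟩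
      = (0 : UJ K n).1 ⟨i, by omega⟩ ⟨i + 2, hi⟩ := by rw [hz2]
  rw [jmul_entry_two (psi_EN_su hn h2 ψ hj k hk) (psi_EN_su hn h2 ψ hj l hl)
    (c := ⟨i + 1, by omega⟩) rfl rfl] at hE
  rw [cmat_pos ψ (by omega : i + 1 < n) hk, cmat_pos ψ (by omega : i + 1 + 1 < n) hl,
    cmat_pos ψ (by omega : i + 1 < n) hl, cmat_pos ψ (by omega : i + 1 + 1 < n) hk]
  exact hE
end Extract
section Main
variable {K : Type*} [Field K] {n : ℕ}

theorem padF_pos {G : Type*} [CommGroup G] (η : Fin (n - 1) → G) {v : ℕ} (h : v < n - 1) :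
    padF G η v = η ⟨v, h⟩ := dif_pos h

theorem entry_smul (c : K) (x : UJ K n) (p q : Fin n) :
    ((c • x : UJ K n) : Matrix (Fin n) (Fin n) K) p q = c * x.1 p q := rfl

theorem EN_mem_elemComp {G : Type*} [CommGroup G] (η : Fin (n - 1) → G) (k : ℕ)
    (hk : k + 1 < n) :
    EN K k hk ∈ elemComp K η (η ⟨k, by omega⟩) := by
  have h := Eu_mem_elemComp (K := K) η ⟨k, by omega⟩ ⟨k + 1, hk⟩ (Fin.mk_le_mk.mpr (by omega))
  rwa [elemDeg_single η rfl, padF_pos η (by omega : k < n - 1)] at h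

theorem cmat_deg {G : Type*} [CommGroup G] (η η' : Fin (n - 1) → G) (ψ : UJ K n ≃ₗ[K] UJ K n)
    (hg : ∀ g, (elemComp K η g).map (ψ : UJ K n →ₗ[K] UJ K n) = elemComp K η' g)
    (i k : ℕ) (hi : i + 1 < n) (hk : k + 1 < n) (hc : cmat ψ i k ≠ 0) :
    η' ⟨i, by omega⟩ = η ⟨k, by omega⟩ := by
  have hmem : ψ (EN K k hk) ∈ elemComp K η' (η ⟨k, by omega⟩) := by
    rw [← hg]
    exact ⟨EN K k hk, EN_mem_elemComp η k hk, rfl⟩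
  by_contra hne
  apply hc
  rw [cmat_pos ψ hi hk]
  apply elemComp_support η' _ hmem ⟨i, by omega⟩ ⟨i + 1, hi⟩ (Fin.mk_le_mk.mpr (by omega))
  rw [elemDeg_single η' rfl, padF_pos η' (by omega : i < n - 1)]
  exact fun e => hne e

theorem cmat_mul (h2 : (2 : K) ≠ 0) (hn : 2 ≤ n) (ψ : UJ K n ≃ₗ[K] UJ K n)
    (hj : ∀ x y, ψ (jmul x y) = jmul (ψ x) (ψ y))
    (hj' : ∀ x y, ψ.symm (jmul x y) = jmul (ψ.symm x) (ψ.symm y))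
    (a i : ℕ) (ha : a + 1 < n) (hi : i + 1 < n) :
    (∑ k ∈ Finset.range (n - 1), cmat ψ a k * cmat ψ.symm k i) = if a = i then 1 else 0 := by
  classical
  set w : UJ K n := ψ.symm (EN K i hi) with hw
  have hwsu : ∀ t : Fin n, w.1 t t = 0 := psi_EN_su hn h2 ψ.symm hj' i hi
  set S : UJ K n := ∑ k ∈ (Finset.range (n - 1)).attach,
      cmat ψ.symm k.1 i • EN K k.1 (by have := Finset.mem_range.mp k.2; omega) with hS
  have hSentry : ∀ p q : Fin n, (S : Matrix (Fin n) (Fin n) K) p q =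
      if (q : ℕ) = (p : ℕ) + 1 then cmat ψ.symm (p : ℕ) i else 0 := by
    intro p q
    rw [hS, entry_of_sum]
    by_cases hqp : (q : ℕ) = (p : ℕ) + 1
    · rw [if_pos hqp]
      have hpm : (p : ℕ) ∈ Finset.range (n - 1) := by
        rw [Finset.mem_range]; have := q.isLt; omega
      rw [Finset.sum_eq_single_of_mem (⟨(p : ℕ), hpm⟩ : {x // x ∈ Finset.range (n - 1)})
        (Finset.mem_attach _ _)]
      · rw [entry_smul, EN_entry, if_pos ⟨rfl, hqp⟩, mul_one]
      · intro b _ hb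
        rw [entry_smul, EN_entry, if_neg, mul_zero]
        rintro ⟨e1, _⟩
        exact hb (Subtype.ext e1.symm)
    · rw [if_neg hqp]
      apply Finset.sum_eq_zero
      intro b _
      rw [entry_smul, EN_entry, if_neg, mul_zero]
      rintro ⟨e1, e2⟩
      omega
  set u : UJ K n := w - S with hu
  have huU2 : u ∈ U2 K n := by
    intro p q hpq
    have hent : u.1 p q = w.1 p q - (S : Matrix (Fin n) (Fin n) K) p q := rfl
    rw [hent, hSentry]
    rcases Nat.lt_or_ge (q : ℕ) ((p : ℕ) + 1) with hlt | hge
    · rw [if_neg (by omega), su_entry_le hwsu (by omega), sub_zero]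
    · have hq : (q : ℕ) = (p : ℕ) + 1 := by omega
      rw [if_pos hq]
      have hpn : (p : ℕ) + 1 < n := by have := q.isLt; omega
      rw [cmat_pos ψ.symm hpn hi]
      have hp' : (⟨(p : ℕ), by omega⟩ : Fin n) = p := Fin.ext rfl
      have hq' : (⟨(p : ℕ) + 1, hpn⟩ : Fin n) = q := Fin.ext hq.symm
      rw [hp', hq', ← hw, sub_self]
  have hEq : EN K i hi = ψ S + ψ u := by
    have hsw : S + u = w := by rw [hu]; abel
    rw [← map_add, hsw, hw, LinearEquiv.apply_symm_apply]
  have hfin : (EN K i hi).1 ⟨a, by omega⟩ ⟨a + 1, ha⟩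
      = (ψ S).1 ⟨a, by omega⟩ ⟨a + 1, ha⟩ + (ψ u).1 ⟨a, by omega⟩ ⟨a + 1, ha⟩ := by
    rw [hEq]; rfl
  rw [EN_entry] at hfin
  have hu0 : (ψ u).1 ⟨a, by omega⟩ ⟨a + 1, ha⟩ = 0 :=
    psi_U2 hn h2 ψ hj huU2 ⟨a, by omega⟩ ⟨a + 1, ha⟩ (by simp)
  have hpsiS : ψ S = ∑ k ∈ (Finset.range (n - 1)).attach,
      cmat ψ.symm k.1 i • ψ (EN K k.1 (by have := Finset.mem_range.mp k.2; omega)) := by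
    rw [hS, map_sum]
    apply Finset.sum_congr rfl
    intro b _
    rw [_root_.map_smul]
  have hSent : (ψ S).1 ⟨a, by omega⟩ ⟨a + 1, ha⟩
      = ∑ k ∈ Finset.range (n - 1), cmat ψ a k * cmat ψ.symm k i := by
    rw [hpsiS, entry_of_sum,
      ← Finset.sum_attach (Finset.range (n - 1)) (fun k => cmat ψ a k * cmat ψ.symm k i)]
    apply Finset.sum_congr rfl
    intro b _
    have hb := Finset.mem_range.mp b.2
    rw [entry_smul, cmat_pos ψ ha (by omega : b.1 + 1 < n)]
    exact mul_comm _ _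
  rw [hSent, hu0, add_zero] at hfin
  by_cases hai : a = i
  · subst hai
    rw [if_pos ⟨rfl, rfl⟩] at hfin
    rw [if_pos rfl]
    exact hfin.symm
  · rw [if_neg (fun hc : _ ∧ _ => hai hc.1)] at hfin
    rw [if_neg hai]
    exact hfin.symm

theorem forward {G : Type*} [CommGroup G] (h2 : (2 : K) ≠ 0) (hn : 2 ≤ n)
    (η η' : Fin (n - 1) → G)
    (hgi : GradedIso (elemComp K η) (elemComp K η')) : η = η' ∨ η = η' ∘ Fin.rev := by
  obtain ⟨ψ, hj, hg⟩ := hgi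
  have hj' : ∀ x y, ψ.symm (jmul x y) = jmul (ψ.symm x) (ψ.symm y) := by
    intro x y
    apply ψ.injective
    rw [hj]
    simp
  have hg' : ∀ g, (elemComp K η' g).map (ψ.symm : UJ K n →ₗ[K] UJ K n) = elemComp K η g := by
    intro g
    rw [← hg g]
    ext x
    constructor
    · rintro ⟨y, ⟨z, hz, rfl⟩, rfl⟩
      simpa using hz
    · intro hx
      exact ⟨ψ x, ⟨x, hx, rfl⟩, by simp⟩
  have hss : ψ.symm.symm = ψ := LinearEquiv.symm_symm ψ
  have hcc' : ∀ a i, a < n - 1 → i < n - 1 →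
      (∑ k ∈ Finset.range (n - 1), cmat ψ a k * cmat ψ.symm k i) = if a = i then 1 else 0 :=
    fun a i haa hii => cmat_mul h2 hn ψ hj hj' a i (by omega) (by omega)
  have hc'c : ∀ a i, a < n - 1 → i < n - 1 →
      (∑ k ∈ Finset.range (n - 1), cmat ψ.symm a k * cmat ψ k i) = if a = i then 1 else 0 := by
    intro a i haa hii
    have hj'' : ∀ x y, ψ.symm.symm (jmul x y) = jmul (ψ.symm.symm x) (ψ.symm.symm y) := by
      rw [hss]; exact hj
    have h := cmat_mul h2 hn ψ.symm hj' hj'' a i (by omega) (by omega)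
    rwa [hss] at h
  have hD : ∀ i k l, i + 1 < n - 1 → k < n - 1 → l < n - 1 → ¬(l = k + 1 ∨ k = l + 1) →
      cmat ψ i k * cmat ψ (i + 1) l + cmat ψ i l * cmat ψ (i + 1) k = 0 :=
    fun i k l h1 hk hl hno => cmat_adj h2 hn ψ hj i k l (by omega) (by omega) (by omega) hno
  have hdeg : ∀ i k, i < n - 1 → k < n - 1 → cmat ψ i k ≠ 0 →
      padF G η' i = padF G η k := by
    intro i k hi hk hc
    rw [padF_pos η' hi, padF_pos η hk]
    exact cmat_deg η η' ψ hg i k (by omega) (by omega) hc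
  have hres := comb h2 (n - 1) (by omega) (padF G η) (padF G η') (cmat ψ) (cmat ψ.symm)
    hcc' hc'c hD hdeg
  rcases hres with h | h
  · left
    funext x
    have hx := h x.1 x.isLt
    rw [padF_pos η x.isLt, padF_pos η' x.isLt] at hx
    have e1 : (⟨x.1, x.isLt⟩ : Fin (n - 1)) = x := Fin.ext rfl
    rwa [e1] at hx
  · right
    funext x
    have hb : n - 1 - 1 - x.1 < n - 1 := by have := x.isLt; omega
    have hx := h x.1 x.isLt
    rw [padF_pos η x.isLt, padF_pos η' hb] at hx
    have e1 : (⟨x.1, x.isLt⟩ : Fin (n - 1)) = x := Fin.ext rfl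
    have e2 : (⟨n - 1 - 1 - x.1, hb⟩ : Fin (n - 1)) = Fin.rev x := by
      apply Fin.ext
      rw [Fin.val_rev]
      have := x.isLt
      show n - 1 - 1 - x.1 = n - 1 - (x.1 + 1)
      omega
    rw [e1, e2] at hx
    exact hx
end Main
/-- Two elementary gradings `(UJ_n, η)` and `(UJ_n, η')` are graded-isomorphic iff
`η = η'` or `η = rev η'`. -/
theorem statement_1 {K : Type*} [Field K] [Infinite K] (h2 : (2 : K) ≠ 0)
    {n : ℕ} (hn : 2 ≤ n) {G : Type*} [CommGroup G] (η η' : Fin (n - 1) → G) :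
    GradedIso (elemComp K η) (elemComp K η') ↔ (η = η' ∨ η = η' ∘ Fin.rev) := by
  constructor
  · exact forward h2 hn η η'
  · intro h
    rcases h with rfl | hrev
    · refine ⟨LinearEquiv.refl K _, fun x y => rfl, fun g => ?_⟩
      simp
    · exact ⟨flipL K n, flip_jmul, fun g => flip_map_elemComp η η' hrev g⟩
end

section
/- Let K be a field of characteristic different from 2, n ≥ 2, and G an abelian group. (a) If (UJ_n, t, η) is an MT grading (t ∈ G of order 2), then the homogeneous component of degree t contains an element x whose n-th left-normed Jordan power x∘x∘⋯∘x (n factors) is nonzero. (b) If UJ_n carries an elementary G-grading, then for every g ∈ G with g ≠ 1, every homogeneous element x of degree g satisfies x∘x∘⋯∘x = 0 (n factors, left-normed). -/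
open Matrix

section AuxProof

variable {K : Type*} [Field K] {n : ℕ}

lemma jmul_val (x y : UJ K n) : (jmul x y).1 = x.1 * y.1 + y.1 * x.1 := rfl

lemma Eu_val (i j : Fin n) (h : i ≤ j) : (Eu K i j h).1 = Matrix.single i j 1 := rfl

lemma jpow_one (x : UJ K n) : jpow x 1 = x := rfl

lemma jpow_succ_succ (x : UJ K n) (k : ℕ) :
    jpow x (k + 2) = jmul (jpow x (k + 1)) x := rfl

lemma Sdeg_mul {M N : Matrix (Fin n) (Fin n) K} {a b : ℕ}
    (hM : ∀ i j : Fin n, (j : ℕ) < (i : ℕ) + a → M i j = 0)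
    (hN : ∀ i j : Fin n, (j : ℕ) < (i : ℕ) + b → N i j = 0) :
    ∀ i j : Fin n, (j : ℕ) < (i : ℕ) + (a + b) → (M * N) i j = 0 := by
  intro i j h
  rw [Matrix.mul_apply]
  apply Finset.sum_eq_zero
  intro k _
  rcases lt_or_ge (k : ℕ) ((i : ℕ) + a) with hk | hk
  · rw [hM i k hk, zero_mul]
  · rw [hN k j (by omega), mul_zero]

/-- If `x` is strictly upper triangular, `jpow x (k+1)` vanishes on entries with
`j < i + (k+1)`. -/
lemma jpow_strict (x : UJ K n)
    (hx : ∀ i j : Fin n, (j : ℕ) < (i : ℕ) + 1 → x.1 i j = 0) :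
    ∀ k, ∀ i j : Fin n, (j : ℕ) < (i : ℕ) + (k + 1) → (jpow x (k + 1)).1 i j = 0 := by
  intro k
  induction k with
  | zero => exact hx
  | succ m ih =>
    intro i j h
    rw [jpow_succ_succ, jmul_val]
    have h1 := Sdeg_mul ih hx i j (by omega)
    have h2 := Sdeg_mul hx ih i j (by omega)
    simp [Matrix.add_apply, h1, h2]

lemma comp_unique {G : Type*} [CommGroup G] (A : UJGrading K n G) {g h : G}
    (hgh : g ≠ h) (x : UJ K n) (hxg : x ∈ A.comp g) (hxh : x ∈ A.comp h) : x = 0 := by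
  have hd := A.indep g
  have hle : A.comp h ≤ ⨆ (j) (_ : j ≠ g), A.comp j :=
    le_iSup₂ (f := fun (j : G) (_ : j ≠ g) => A.comp j) h (Ne.symm hgh)
  exact Submodule.disjoint_def.mp hd x hxg (hle hxh)

lemma diag_deg_one (h2 : (2 : K) ≠ 0) {G : Type*} [CommGroup G] (A : UJGrading K n G)
    (i : Fin n) (h : G) (hh : Eu K i i le_rfl ∈ A.comp h) : h = 1 := by
  have hsq : jmul (Eu K i i le_rfl) (Eu K i i le_rfl) = (2 : K) • Eu K i i le_rfl := by
    apply Subtype.ext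
    show Matrix.single i i (1:K) * Matrix.single i i 1 +
      Matrix.single i i 1 * Matrix.single i i 1 = (2 : K) • Matrix.single i i 1
    rw [Matrix.single_mul_single_same, smul_single]
    ext a b
    by_cases hab : i = a ∧ i = b
    · obtain ⟨rfl, rfl⟩ := hab
      simp [Matrix.single_apply_same]; ring
    · simp [Matrix.single_apply_of_ne _ _ _ _ _ hab]
  by_contra hne
  have h1 : h * h ≠ h := fun hc => hne (by
    have := mul_left_cancel (a := h) (b := h) (c := 1) (by rw [mul_one]; exact hc)
    exact this)
  have hmem2 : (2 : K) • Eu K i i le_rfl ∈ A.comp (h * h) := by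
    rw [← hsq]; exact A.jmul_mem h h _ _ hh hh
  have hmemh : (2 : K) • Eu K i i le_rfl ∈ A.comp h := Submodule.smul_mem _ _ hh
  have hz := comp_unique A h1 _ hmem2 hmemh
  have : ((2 : K) • Eu K i i le_rfl).1 i i = 0 := by rw [hz]; rfl
  rw [Submodule.coe_smul, Matrix.smul_apply, Eu_val, Matrix.single_apply_same,
    smul_eq_mul, mul_one] at this
  exact h2 this

/-- A homogeneous element of degree `g ≠ 1` in an elementary grading is strictly upper
triangular. -/
lemma elem_strict (h2 : (2 : K) ≠ 0) {G : Type*} [CommGroup G] (A : UJGrading K n G)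
    (hE : IsElementaryFam A.comp) {g : G} (hg : g ≠ 1) {x : UJ K n}
    (hx : x ∈ A.comp g) : ∀ i j : Fin n, (j : ℕ) ≤ (i : ℕ) → x.1 i j = 0 := by
  classical
  choose d hd using hE
  set y : UJ K n := ∑ p : Fin n × Fin n,
    (if h : p.1 ≤ p.2 then (if d p.1 p.2 h = g then x.1 p.1 p.2 • Eu K p.1 p.2 h else 0)
      else 0) with hy_def
  set z : UJ K n := ∑ p : Fin n × Fin n,
    (if h : p.1 ≤ p.2 then (if d p.1 p.2 h = g then 0 else x.1 p.1 p.2 • Eu K p.1 p.2 h)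
      else 0) with hz_def
  have hyz : y + z = x := by
    rw [hy_def, hz_def, ← Finset.sum_add_distrib]
    apply Subtype.ext
    rw [AddSubmonoidClass.coe_finset_sum]
    ext i j
    rw [Matrix.sum_apply]
    rw [Finset.sum_eq_single (⟨i, j⟩ : Fin n × Fin n)]
    · by_cases hij : i ≤ j
      · simp only [hij, dif_pos]
        by_cases hdg : d i j hij = g <;>
          simp [hdg, Eu_val, Matrix.smul_apply, Matrix.single_apply_same]
      · have hji : (j : ℕ) < (i : ℕ) := by
          have := Fin.lt_or_ge j i
          rcases this with h' | h'
          · exact h'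
          · exact absurd h' hij
        simp only [hij, dif_neg, not_false_iff]
        simp [x.2 i j hji]
    · intro p _ hp
      have hne : ¬(p.1 = i ∧ p.2 = j) := by
        rintro ⟨h1', h2'⟩; exact hp (Prod.ext h1' h2')
      by_cases hple : p.1 ≤ p.2
      · simp only [hple, dif_pos]
        by_cases hdg : d p.1 p.2 hple = g <;>
          simp [hdg, Eu_val, Matrix.smul_apply, Matrix.single_apply_of_ne _ _ _ _ _ hne]
      · simp [hple]
    · intro hm; exact absurd (Finset.mem_univ _) hm
  have hymem : y ∈ A.comp g := by
    apply Submodule.sum_mem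
    intro p _
    by_cases hple : p.1 ≤ p.2
    · simp only [hple, dif_pos]
      by_cases hdg : d p.1 p.2 hple = g
      · simp only [hdg, if_pos]
        exact Submodule.smul_mem _ _ (hdg ▸ hd p.1 p.2 hple)
      · simp only [hdg, if_neg, not_false_iff]
        exact Submodule.zero_mem _
    · simp only [hple, dif_neg, not_false_iff]
      exact Submodule.zero_mem _
  have hzmem : z ∈ ⨆ (j) (_ : j ≠ g), A.comp j := by
    apply Submodule.sum_mem
    intro p _
    by_cases hple : p.1 ≤ p.2
    · simp only [hple, dif_pos]
      by_cases hdg : d p.1 p.2 hple = g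
      · simp only [hdg, if_pos]
        exact Submodule.zero_mem _
      · simp only [hdg, if_neg, not_false_iff]
        have hle : A.comp (d p.1 p.2 hple) ≤ ⨆ (j) (_ : j ≠ g), A.comp j :=
          le_iSup₂ (f := fun (j : G) (_ : j ≠ g) => A.comp j) _ hdg
        exact hle (Submodule.smul_mem _ _ (hd p.1 p.2 hple))
    · simp only [hple, dif_neg, not_false_iff]
      exact Submodule.zero_mem _
  have hzg : z ∈ A.comp g := by
    have : z = x - y := by rw [← hyz]; abel
    rw [this]
    exact Submodule.sub_mem _ hx hymem
  have hz0 : z = 0 := Submodule.disjoint_def.mp (A.indep g) z hzg hzmem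
  -- now extract diagonal vanishing
  have hdiag : ∀ i : Fin n, x.1 i i = 0 := by
    intro i
    have hzi : (z : Matrix (Fin n) (Fin n) K) i i = 0 := by rw [hz0]; rfl
    rw [hz_def] at hzi
    rw [AddSubmonoidClass.coe_finset_sum] at hzi
    rw [Matrix.sum_apply, Finset.sum_eq_single (⟨i, i⟩ : Fin n × Fin n)] at hzi
    · have hii : (⟨i, i⟩ : Fin n × Fin n).1 ≤ (⟨i, i⟩ : Fin n × Fin n).2 := le_rfl
      have hd1 : d i i hii = 1 := diag_deg_one h2 A i _ (hd i i hii)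
      have hdg : ¬ d i i hii = g := by rw [hd1]; exact fun hc => hg hc.symm
      simpa [hii, hdg, Eu_val, Matrix.smul_apply, Matrix.single_apply_same]
        using hzi
    · intro p _ hp
      have hne : ¬(p.1 = i ∧ p.2 = i) := by
        rintro ⟨h1', h2'⟩; exact hp (Prod.ext h1' h2')
      by_cases hple : p.1 ≤ p.2
      · simp only [hple, dif_pos]
        by_cases hdg : d p.1 p.2 hple = g <;>
          simp [hdg, Eu_val, Matrix.smul_apply, Matrix.single_apply_of_ne _ _ _ _ _ hne]
      · simp [hple]
    · intro hm; exact absurd (Finset.mem_univ _) hm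
  intro i j hji
  rcases lt_or_eq_of_le hji with h' | h'
  · exact x.2 i j h'
  · have : j = i := Fin.ext h'
    subst this
    exact hdiag j

end AuxProof

/-- (a) In an MT grading `(UJ_n, t, η)`, the component of degree `t` contains an element
whose `n`-th left-normed Jordan power is nonzero.
(b) In an elementary grading, every homogeneous element of degree `g ≠ 1` has vanishing
`n`-th left-normed Jordan power. -/
theorem statement_4 {K : Type*} [Field K] (h2 : (2 : K) ≠ 0)
    {n : ℕ} (hn : 2 ≤ n) {G : Type*} [CommGroup G] :
    (∀ (t : G), orderOf t = 2 → ∀ η : Fin (n / 2) → G,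
      ∃ x : UJ K n, x ∈ mtComp K t η t ∧ jpow x n ≠ 0) ∧
    (∀ A : UJGrading K n G, IsElementaryFam A.comp →
      ∀ g : G, g ≠ 1 → ∀ x ∈ A.comp g, jpow x n = 0) := by
  constructor
  · -- part (a)
    intro t ht η
    have h00 : 0 + 0 < n := by omega
    refine ⟨Ym K 0 0 h00, ?_, ?_⟩
    · apply Submodule.subset_span
      right
      exact ⟨0, 0, h00, by simp [mtDeg], rfl⟩
    · set i0 : Fin n := ⟨0, by omega⟩ with hi0
      set i1 : Fin n := ⟨n - 1, by omega⟩ with hi1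
      have hne : i0 ≠ i1 := by
        simp only [hi0, hi1, Fin.mk.injEq, ne_eq]
        omega
      set E0 : Matrix (Fin n) (Fin n) K := Matrix.single i0 i0 1 with hE0
      set E1 : Matrix (Fin n) (Fin n) K := Matrix.single i1 i1 1 with hE1
      have hval : (Ym K 0 0 h00).1 = E0 - E1 := rfl
      have hE00 : E0 * E0 = E0 := by rw [hE0, Matrix.single_mul_single_same, one_mul]
      have hE11 : E1 * E1 = E1 := by rw [hE1, Matrix.single_mul_single_same, one_mul]
      have hE01 : E0 * E1 = 0 := Matrix.single_mul_single_of_ne _ _ _ _ hne 1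
      have hE10 : E1 * E0 = 0 := Matrix.single_mul_single_of_ne _ _ _ _ (Ne.symm hne) 1
      set a : Matrix (Fin n) (Fin n) K := E0 - E1 with ha
      set b : Matrix (Fin n) (Fin n) K := E0 + E1 with hb
      have haa : a * a = b := by
        rw [ha, hb]
        simp only [Matrix.mul_sub, Matrix.sub_mul, hE00, hE01, hE10, hE11]
        abel
      have hab : a * b + b * a = (2 : K) • a := by
        rw [ha, hb]
        simp only [Matrix.mul_sub, Matrix.sub_mul, Matrix.mul_add, Matrix.add_mul,
          hE00, hE01, hE10, hE11, two_smul]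
        abel
      set x : UJ K n := Ym K 0 0 h00 with hx
      have key : ∀ k, (jpow x (k + 1)).1 =
          ((2 : K) ^ k) • (if Even k then a else b) := by
        intro k
        induction k with
        | zero => simp [jpow_one, hval, ← hx]
        | succ m ih =>
          rw [jpow_succ_succ, jmul_val, ih, hval]
          by_cases hm : Even m
          · have hm1 : ¬ Even (m + 1) := by simp [Nat.even_add_one, hm]
            rw [if_pos hm, if_neg hm1]
            rw [Matrix.smul_mul, Matrix.mul_smul, haa, ← smul_add, ← two_smul K b,
              smul_smul, pow_succ]
          · have hm1 : Even (m + 1) := Nat.even_add_one.mpr hm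
            rw [if_neg hm, if_pos hm1]
            rw [Matrix.smul_mul, Matrix.mul_smul, ← smul_add]
            rw [show b * a + a * b = a * b + b * a from add_comm _ _, hab, smul_smul,
              pow_succ]
      intro hcon
      obtain ⟨m, rfl⟩ : ∃ m, n = m + 1 := ⟨n - 1, by omega⟩
      have hval0 : (jpow x (m + 1)).1 i0 i0 = (2 : K) ^ m := by
        rw [key m]
        have ha00 : a i0 i0 = 1 := by
          rw [ha, Matrix.sub_apply, hE0, hE1, Matrix.single_apply_same,
            Matrix.single_apply_of_ne _ _ _ _ _ (fun hc => hne hc.1.symm)]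
          ring
        have hb00 : b i0 i0 = 1 := by
          rw [hb, Matrix.add_apply, hE0, hE1, Matrix.single_apply_same,
            Matrix.single_apply_of_ne _ _ _ _ _ (fun hc => hne hc.1.symm)]
          ring
        by_cases hm : Even m <;>
          simp [hm, Matrix.smul_apply, ha00, hb00]
      rw [hcon] at hval0
      have : ((0 : UJ K (m + 1)) : Matrix (Fin (m + 1)) (Fin (m + 1)) K) i0 i0 = 0 := rfl
      rw [this] at hval0
      exact pow_ne_zero m h2 hval0.symm
  · -- part (b)
    intro A hE g hg x hx
    have hstrict := elem_strict h2 A hE hg hx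
    have hx1 : ∀ i j : Fin (n), (j : ℕ) < (i : ℕ) + 1 → x.1 i j = 0 := by
      intro i j h
      exact hstrict i j (by omega)
    obtain ⟨m, rfl⟩ : ∃ m, n = m + 1 := ⟨n - 1, by omega⟩
    have hk := jpow_strict x hx1 m
    apply Subtype.ext
    ext i j
    rw [hk i j (by omega)]
    rfl
end

section
/- Let UJ_n carry an elementary G-grading and set t_i = deg e_{i,i+1} for i = 1,…,n−1. Then t_i t_j = t_j t_i for all i, j ∈ {1,…,n−1}; consequently the support of the grading is commutative (all its elements pairwise commute). -/
open Matrix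

section Aux

variable {K : Type*} [Field K] {n : ℕ}

lemma Eu_ne_zero (i j : Fin n) (h : i ≤ j) : Eu K i j h ≠ 0 := by
  intro hEq
  have h1 : Matrix.single i j (1 : K) i j = 0 :=
    congrArg (fun x : UJ K n => x.1 i j) hEq
  simp [Matrix.single] at h1

lemma jmul_comm (x y : UJ K n) : jmul x y = jmul y x := Subtype.ext (add_comm _ _)

lemma jmul_Eu (i j k : Fin n) (hij : i ≤ j) (hjk : j ≤ k) (hik : i ≠ k) :
    jmul (Eu K i j hij) (Eu K j k hjk) = Eu K i k (hij.trans hjk) := by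
  apply Subtype.ext
  show Matrix.single i j (1 : K) * Matrix.single j k 1
      + Matrix.single j k 1 * Matrix.single i j 1
      = Matrix.single i k 1
  have hz : Matrix.single j k (1 : K) * Matrix.single i j 1 = 0 :=
    Matrix.single_mul_single_of_ne (1 : K) j k i hik.symm 1
  rw [Matrix.single_mul_single_same, mul_one, hz, add_zero]

lemma jmul_Eu_self (i : Fin n) :
    jmul (Eu K i i le_rfl) (Eu K i i le_rfl) = (2 : K) • Eu K i i le_rfl := by
  apply Subtype.ext
  show Matrix.single i i (1 : K) * Matrix.single i i 1
      + Matrix.single i i 1 * Matrix.single i i 1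
      = (2 : K) • Matrix.single i i 1
  rw [Matrix.single_mul_single_same, mul_one, Matrix.smul_single, smul_eq_mul,
    mul_one, ← Matrix.single_add]
  norm_num

/-- The product `t_i t_{i+1} ⋯ t_{j-1}` (out-of-range indices contribute `1`). -/
def prodT {G : Type*} [Group G] {m : ℕ} (t : Fin m → G) (i j : ℕ) : G :=
  ((List.range' i (j - i)).map (fun k => if hk : k < m then t ⟨k, hk⟩ else 1)).prod

lemma prodT_self {G : Type*} [Group G] {m : ℕ} (t : Fin m → G) (i : ℕ) :
    prodT t i i = 1 := by simp [prodT]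

lemma prodT_succ {G : Type*} [Group G] {m : ℕ} (t : Fin m → G) {i j : ℕ}
    (hij : i ≤ j) (hj : j < m) : prodT t i (j + 1) = prodT t i j * t ⟨j, hj⟩ := by
  unfold prodT
  rw [show j + 1 - i = (j - i) + 1 from by omega, List.range'_1_concat,
    List.map_append, List.prod_append]
  simp [show i + (j - i) = j from by omega, dif_pos hj]

lemma prodT_comm_t {G : Type*} [Group G] {m : ℕ} (t : Fin m → G)
    (hcomm : ∀ a b, Commute (t a) (t b)) (a : Fin m) (i j : ℕ) :
    Commute (t a) (prodT t i j) := by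
  apply Commute.list_prod_right
  intro x hx
  simp only [List.mem_map] at hx
  obtain ⟨k, -, rfl⟩ := hx
  by_cases hk : k < m
  · rw [dif_pos hk]; exact hcomm a ⟨k, hk⟩
  · rw [dif_neg hk]; exact Commute.one_right _

lemma prodT_comm {G : Type*} [Group G] {m : ℕ} (t : Fin m → G)
    (hcomm : ∀ a b, Commute (t a) (t b)) (i j i' j' : ℕ) :
    Commute (prodT t i j) (prodT t i' j') := by
  show Commute (List.prod _) _
  apply Commute.list_prod_left
  intro x hx
  simp only [List.mem_map] at hx
  obtain ⟨k, -, rfl⟩ := hx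
  by_cases hk : k < m
  · rw [dif_pos hk]; exact prodT_comm_t t hcomm ⟨k, hk⟩ i' j'
  · rw [dif_neg hk]; exact Commute.one_left _

/-- Every element of `UJ K n` lies in the span of the matrix units. -/
lemma mem_span_Eu (x : UJ K n) :
    x ∈ Submodule.span K {y : UJ K n | ∃ (i j : Fin n) (h : i ≤ j), y = Eu K i j h} := by
  set S : Set (UJ K n) := {y : UJ K n | ∃ (i j : Fin n) (h : i ≤ j), y = Eu K i j h}
  set ι : UJ K n →ₗ[K] Matrix (Fin n) (Fin n) K := (UTs K n).subtype
  have hmem : (x : Matrix (Fin n) (Fin n) K) ∈ Submodule.span K (ι '' S) := by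
    have hx1 : (x : Matrix (Fin n) (Fin n) K)
        = ∑ i : Fin n, ∑ j : Fin n, Matrix.single i j (x.1 i j) :=
      Matrix.matrix_eq_sum_single _
    rw [hx1]
    apply Submodule.sum_mem
    intro i _
    apply Submodule.sum_mem
    intro j _
    rcases lt_or_ge (j : ℕ) (i : ℕ) with hij | hij
    · rw [x.2 i j hij]
      have : Matrix.single i j (0 : K) = 0 := by
        ext a b; simp [Matrix.single]
      rw [this]; exact Submodule.zero_mem _
    · have hij' : i ≤ j := hij
      have : Matrix.single i j (x.1 i j)
          = (x.1 i j) • Matrix.single i j (1 : K) := by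
        rw [Matrix.smul_single, smul_eq_mul, mul_one]
      rw [this]
      apply Submodule.smul_mem
      apply Submodule.subset_span
      exact ⟨Eu K i j hij', ⟨i, j, hij', rfl⟩, rfl⟩
  rw [← Submodule.map_span] at hmem
  obtain ⟨y, hy, hyx⟩ := hmem
  have : y = x := Subtype.ext hyx
  rwa [this] at hy

end Aux

/-- In an elementary grading the degrees `t_i = deg e_{i,i+1}` pairwise commute, and the
support of the grading is commutative. -/
theorem statement_6 {K : Type*} [Field K] (h2 : (2 : K) ≠ 0)
    {n : ℕ} (hn : 2 ≤ n) {G : Type*} [Group G]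
    (A : UJGrading K n G) (hA : IsElementaryFam A.comp)
    (t : Fin (n - 1) → G)
    (ht : ∀ i : Fin (n - 1),
      Eu K ⟨i.1, by have := i.isLt; omega⟩ ⟨i.1 + 1, by have := i.isLt; omega⟩
        (Fin.mk_le_mk.mpr (by omega)) ∈ A.comp (t i)) :
    (∀ i j : Fin (n - 1), t i * t j = t j * t i) ∧
    (∀ g h : G, A.comp g ≠ ⊥ → A.comp h ≠ ⊥ → g * h = h * g) := by
  -- uniqueness of degree
  have degu : ∀ {x : UJ K n}, x ≠ 0 → ∀ {g h' : G}, x ∈ A.comp g → x ∈ A.comp h' → g = h' := by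
    intro x hx g h' hg hh
    by_contra hne
    have hd : Disjoint (A.comp g) (A.comp h') := A.indep.pairwiseDisjoint hne
    exact hx (Submodule.disjoint_def.mp hd x hg hh)
  -- the key multiplication fact
  have key : ∀ (i j k : Fin n) (hij : i ≤ j) (hjk : j ≤ k), i ≠ k → ∀ g h' : G,
      Eu K i j hij ∈ A.comp g → Eu K j k hjk ∈ A.comp h' →
      Eu K i k (hij.trans hjk) ∈ A.comp (g * h') ∧ g * h' = h' * g := by
    intro i j k hij hjk hik g h' hg hh
    have h1 : jmul (Eu K i j hij) (Eu K j k hjk) ∈ A.comp (g * h') :=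
      A.jmul_mem _ _ _ _ hg hh
    have h2' : jmul (Eu K j k hjk) (Eu K i j hij) ∈ A.comp (h' * g) :=
      A.jmul_mem _ _ _ _ hh hg
    rw [jmul_comm] at h2'
    rw [jmul_Eu i j k hij hjk hik] at h1 h2'
    exact ⟨h1, degu (Eu_ne_zero _ _ _) h1 h2'⟩
  -- part 1
  have part1 : ∀ i j : Fin (n - 1), t i * t j = t j * t i := by
    have main : ∀ i j : Fin (n - 1), (i : ℕ) < (j : ℕ) → t i * t j = t j * t i := by
      intro i j hlt
      have hi := i.isLt
      have hj := j.isLt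
      obtain ⟨d, hd⟩ := hA ⟨i.1 + 1, by omega⟩ ⟨j.1 + 1, by omega⟩ (Fin.mk_le_mk.mpr (by omega))
      obtain ⟨e, he⟩ := hA ⟨i.1 + 1, by omega⟩ ⟨j.1, by omega⟩ (Fin.mk_le_mk.mpr (by omega))
      have c1 : t i * d = d * t i :=
        (key ⟨i.1, by omega⟩ ⟨i.1 + 1, by omega⟩ ⟨j.1 + 1, by omega⟩
          (Fin.mk_le_mk.mpr (by omega)) (Fin.mk_le_mk.mpr (by omega))
          (by simp only [ne_eq, Fin.mk.injEq]; omega) _ _ (ht i) hd).2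
      have c2 : t i * e = e * t i :=
        (key ⟨i.1, by omega⟩ ⟨i.1 + 1, by omega⟩ ⟨j.1, by omega⟩
          (Fin.mk_le_mk.mpr (by omega)) (Fin.mk_le_mk.mpr (by omega))
          (by simp only [ne_eq, Fin.mk.injEq]; omega) _ _ (ht i) he).2
      have c3 : Eu K ⟨i.1 + 1, by omega⟩ ⟨j.1 + 1, by omega⟩ (Fin.mk_le_mk.mpr (by omega))
          ∈ A.comp (e * t j) :=
        (key ⟨i.1 + 1, by omega⟩ ⟨j.1, by omega⟩ ⟨j.1 + 1, by omega⟩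
          (Fin.mk_le_mk.mpr (by omega)) (Fin.mk_le_mk.mpr (by omega))
          (by simp only [ne_eq, Fin.mk.injEq]; omega) _ _ he (ht j)).1
      have hd2 : d = e * t j := degu (Eu_ne_zero _ _ _) hd c3
      have h4 : Commute (t i) (e * t j) := by rw [← hd2]; exact c1
      have h5 : Commute (t i) e := c2
      have h6 : Commute (t i) (e⁻¹ * (e * t j)) := h5.inv_right.mul_right h4
      rwa [inv_mul_cancel_left] at h6
    intro i j
    rcases lt_trichotomy (i : ℕ) (j : ℕ) with h | h | h
    · exact main i j h
    · rw [Fin.ext h]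
    · exact (main j i h).symm
  refine ⟨part1, ?_⟩
  -- diagonal degrees are trivial
  have degDiag : ∀ (i : Fin n) (g : G), Eu K i i le_rfl ∈ A.comp g → g = 1 := by
    intro i g hg
    have h1 : jmul (Eu K i i le_rfl) (Eu K i i le_rfl) ∈ A.comp (g * g) :=
      A.jmul_mem _ _ _ _ hg hg
    rw [jmul_Eu_self] at h1
    have h0 : (2 : K) • Eu K i i le_rfl ∈ A.comp g := Submodule.smul_mem _ _ hg
    have hgg : g * g = g := degu (smul_ne_zero h2 (Eu_ne_zero _ _ _)) h1 h0
    exact mul_eq_left.mp hgg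
  -- degree formula
  have degF : ∀ (j : ℕ) (hj : j < n) (i : ℕ) (hi : i ≤ j) (g : G),
      Eu K ⟨i, by omega⟩ ⟨j, hj⟩ (Fin.mk_le_mk.mpr hi) ∈ A.comp g → g = prodT t i j := by
    intro j
    induction j with
    | zero =>
      intro hj i hi g hg
      obtain rfl : i = 0 := by omega
      rw [prodT_self]
      exact degDiag _ _ hg
    | succ j IH =>
      intro hj i hi g hg
      by_cases hij : i = j + 1
      · subst hij
        rw [prodT_self]
        exact degDiag _ _ hg
      · have hi' : i ≤ j := by omega
        have hjn : j < n - 1 := by omega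
        obtain ⟨d, hd⟩ := hA ⟨i, by omega⟩ ⟨j, by omega⟩ (Fin.mk_le_mk.mpr hi')
        have hdp : d = prodT t i j := IH (by omega) i hi' d hd
        have hkey := (key ⟨i, by omega⟩ ⟨j, by omega⟩ ⟨j + 1, hj⟩
          (Fin.mk_le_mk.mpr hi') (Fin.mk_le_mk.mpr (by omega))
          (by simp only [ne_eq, Fin.mk.injEq]; omega) d (t ⟨j, hjn⟩) hd (ht ⟨j, hjn⟩)).1
        have hgd : g = d * t ⟨j, hjn⟩ := degu (Eu_ne_zero _ _ _) hg hkey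
        rw [hgd, hdp, prodT_succ t hi' hjn]
  -- support elements contain some matrix unit
  have suppEu : ∀ {g : G}, A.comp g ≠ ⊥ →
      ∃ (i j : Fin n) (h : i ≤ j), Eu K i j h ∈ A.comp g := by
    intro g hg
    by_contra hno
    push_neg at hno
    set U : Submodule K (UJ K n) := ⨆ (h : G) (_ : h ≠ g), A.comp h with hU
    have hT : ∀ x : UJ K n, x ∈ U := by
      intro x
      have hx := mem_span_Eu x
      refine Submodule.span_le.mpr ?_ hx
      rintro y ⟨i, j, hij, rfl⟩
      obtain ⟨d, hd⟩ := hA i j hij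
      have hdg : d ≠ g := by
        intro hdg; subst hdg; exact hno i j hij hd
      have hle : A.comp d ≤ U := le_iSup₂ (f := fun (h : G) (_ : h ≠ g) => A.comp h) d hdg
      exact hle hd
    have hdisj : Disjoint (A.comp g) U := A.indep g
    apply hg
    rw [eq_bot_iff]
    intro x hx
    rw [Submodule.mem_bot]
    exact Submodule.disjoint_def.mp hdisj x hx (hT x)
  -- conclusion
  intro g h hgne hhne
  obtain ⟨i, j, hij, hgm⟩ := suppEu hgne
  obtain ⟨i', j', hij', hhm⟩ := suppEu hhne
  have hg' : g = prodT t i.1 j.1 := degF j.1 j.isLt i.1 hij g hgm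
  have hh' : h = prodT t i'.1 j'.1 := degF j'.1 j'.isLt i'.1 hij' h hhm
  rw [hg', hh']
  exact prodT_comm t part1 _ _ _ _
end

section
/- Let 1 ≤ i and m ≥ 1 with i + m ≤ n. Then the left-normed Jordan product Y⁺_{i:1} ∘ Y⁺_{i+1:1} ∘ ⋯ ∘ Y⁺_{i+m−1:1} equals λ·Y⁺_{i:m} where λ = 2^p for some integer p (in particular λ ≠ 0 since char K ≠ 2). -/
open Matrix

lemma Emul_ite {K : Type*} [Field K] {n : ℕ} {a b c d : ℕ} {ha : a < n} {hb : b < n}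
    {hc : c < n} {hd : d < n} :
    Matrix.single (⟨a, ha⟩ : Fin n) (⟨b, hb⟩ : Fin n) (1 : K) *
      Matrix.single (⟨c, hc⟩ : Fin n) (⟨d, hd⟩ : Fin n) (1 : K) =
    if b = c then Matrix.single (⟨a, ha⟩ : Fin n) (⟨d, hd⟩ : Fin n) (1 : K) else 0 := by
  split
  · next hbc =>
    subst hbc
    have : (⟨b, hc⟩ : Fin n) = ⟨b, hb⟩ := rfl
    rw [this, Matrix.single_mul_single_same, one_mul]
  · next hbc =>
    apply Matrix.single_mul_single_of_ne
    simpa [Fin.ext_iff] using hbc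

lemma jmul_Yp {K : Type*} [Field K] {n : ℕ} (i m : ℕ) (hm : 1 ≤ m)
    (h : i + m < n) (h1 : (i + m) + 1 < n) (h2 : i + (m + 1) < n) :
    jmul (Yp K i m h) (Yp K (i + m) 1 h1) =
      (if n = 2*i+2*m+2 ∨ n = 2*i+m+1 then (2:K) else 1) • Yp K i (m+1) h2 := by
  apply Subtype.ext
  simp only [jmul, Yp, Eu, Submodule.coe_add, SetLike.val_smul, add_mul, mul_add, Emul_ite]
  by_cases hA : n = 2*i+2*m+2
  · simp only [if_true,
      eq_true (Or.inl hA : n = 2*i+2*m+2 ∨ n = 2*i+m+1),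
      eq_true (show i + m = n - 1 - (i + m) - 1 by omega),
      eq_true (show i + m + 1 = n - 1 - i - m by omega),
      eq_true (show n - 1 - (i + m) = n - 1 - i - m by omega),
      eq_false (show ¬(n - 1 - i = i + m) by omega),
      eq_false (show ¬(n - 1 - i = n - 1 - (i + m) - 1) by omega),
      eq_false (show ¬(i + m + 1 = i) by omega),
      eq_false (show ¬(n - 1 - (i + m) = i) by omega),
      if_false, add_zero, zero_add]
    ext a b
    simp only [Matrix.add_apply, Matrix.smul_apply, Matrix.single, Matrix.of_apply,
      smul_eq_mul, Fin.ext_iff]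
    split_ifs <;> first | omega | norm_num
  · by_cases hB : n = 2*i+m+1
    · simp only [if_true,
        eq_true (Or.inr hB : n = 2*i+2*m+2 ∨ n = 2*i+m+1),
        eq_true (show n - 1 - i = i + m by omega),
        eq_true (show n - 1 - (i + m) = i by omega),
        eq_true (show n - 1 - (i + m) = n - 1 - i - m by omega),
        eq_false (show ¬(i + m = n - 1 - (i + m) - 1) by omega),
        eq_false (show ¬(n - 1 - i = n - 1 - (i + m) - 1) by omega),
        eq_false (show ¬(i + m + 1 = i) by omega),
        eq_false (show ¬(i + m + 1 = n - 1 - i - m) by omega),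
        if_false, add_zero, zero_add]
      ext a b
      simp only [Matrix.add_apply, Matrix.smul_apply, Matrix.single, Matrix.of_apply,
        smul_eq_mul, Fin.ext_iff]
      split_ifs <;> first | omega | norm_num
    · simp only [if_true,
        eq_false (show ¬(n = 2*i+2*m+2 ∨ n = 2*i+m+1) by omega),
        eq_true (show n - 1 - (i + m) = n - 1 - i - m by omega),
        eq_false (show ¬(i + m = n - 1 - (i + m) - 1) by omega),
        eq_false (show ¬(n - 1 - i = i + m) by omega),
        eq_false (show ¬(n - 1 - i = n - 1 - (i + m) - 1) by omega),
        eq_false (show ¬(i + m + 1 = i) by omega),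
        eq_false (show ¬(n - 1 - (i + m) = i) by omega),
        eq_false (show ¬(i + m + 1 = n - 1 - i - m) by omega),
        if_false, add_zero, zero_add]
      ext a b
      simp only [Matrix.add_apply, Matrix.smul_apply, Matrix.single, Matrix.of_apply,
        smul_eq_mul, Fin.ext_iff]
      split_ifs <;> first | omega | norm_num

lemma smul_jmul_left {K : Type*} [Field K] {n : ℕ} (c : K) (x y : UJ K n) :
    jmul (c • x) y = c • jmul x y := by
  apply Subtype.ext
  simp [jmul, smul_add, mul_smul_comm, smul_mul_assoc]

lemma jprod_append {K : Type*} [Field K] {n : ℕ} {l : List (UJ K n)} (hl : l ≠ []) (y : UJ K n) :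
    jprod (l ++ [y]) = jmul (jprod l) y := by
  cases l with
  | nil => exact absurd rfl hl
  | cons x xs => simp [jprod, List.foldl_append]

lemma main_aux {K : Type*} [Field K] {n : ℕ} (m : ℕ) (hm : 1 ≤ m) :
    ∀ (i : ℕ) (h : i + m < n),
    ∃ p : ℕ, jprod (List.ofFn (fun k : Fin m => Yp K (i + k.1) 1 (by have := k.isLt; omega))) =
      (2 : K) ^ p • Yp K i m h := by
  induction m, hm using Nat.le_induction with
  | base =>
    intro i h
    refine ⟨0, ?_⟩
    simp only [List.ofFn_succ, List.ofFn_zero, pow_zero, one_smul]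
    rfl
  | succ m hm ih =>
    intro i h
    obtain ⟨p, hp⟩ := ih i (by omega)
    rw [List.ofFn_succ', List.concat_eq_append,
      jprod_append (by simp [List.ofFn_eq_nil_iff]; omega)]
    have hstep := jmul_Yp (K := K) (n := n) i m hm (by omega) (by omega) (by omega)
    rw [show (List.ofFn fun k : Fin m =>
        Yp K (i + (Fin.castSucc k).1) 1 (by have := k.isLt; omega)) =
        (List.ofFn fun k : Fin m => Yp K (i + k.1) 1 (by have := k.isLt; omega)) from rfl,
      hp, smul_jmul_left]
    show ∃ p', (2:K)^p • jmul (Yp K i m _) (Yp K (i + m) 1 _) = (2:K)^p' • Yp K i (m+1) h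
    rw [hstep, smul_smul]
    by_cases hc : n = 2*i+2*m+2 ∨ n = 2*i+m+1
    · exact ⟨p + 1, by rw [if_pos hc, pow_succ]⟩
    · exact ⟨p, by rw [if_neg hc, mul_one]⟩

/-- `Y⁺_{i:1} ∘ Y⁺_{i+1:1} ∘ ⋯ ∘ Y⁺_{i+m−1:1} = λ · Y⁺_{i:m}` with `λ = 2^p ≠ 0`. -/
theorem statement_11 {K : Type*} [Field K] (h2 : (2 : K) ≠ 0)
    {n : ℕ} (hn : 2 ≤ n) (i m : ℕ) (hm : 1 ≤ m) (h : i + m < n) :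
    ∃ p : ℤ, (2 : K) ^ p ≠ 0 ∧
      jprod (List.ofFn (fun k : Fin m => Yp K (i + k.1) 1 (by have := k.isLt; omega))) =
        (2 : K) ^ p • Yp K i m h := by
  obtain ⟨p, hp⟩ := main_aux (K := K) (n := n) m hm i h
  refine ⟨(p : ℤ), ?_, ?_⟩
  · rw [zpow_natCast]; exact pow_ne_zero p h2
  · rw [zpow_natCast]; exact hp
end
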